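/- arXiv:2504.16437 — 8 statements merged into one kernel-verified Lean document; each statement's English description precedes it below -/
import Mathlib

section
/- There exist functions V_A, V_B : {0,1}^d → S_{3d} such that for all vectors a, b ∈ {0,1}^d, the length of a longest common subsequence of V_A(a) and V_B(b) equals 2d − ⟨a, b⟩, where ⟨a, b⟩ = Σ_{i∈[d]} a[i]b[i]. Concretely, V_A(a) is the concatenation over i ∈ [d] of the coordinate gadget C_A(a[i]) shifted by 3(i−1), and similarly for V_B(b) with C_B. -/
/-- Length of a longest common subsequence of two strings (lists over ℕ). -/
noncomputable def LCS (x y : List ℕ) : ℕ :=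
  sSup {k | ∃ s : List ℕ, s.Sublist x ∧ s.Sublist y ∧ s.length = k}

/-- Ulam distance between permutations, via `d_U(σ,τ) = |σ| − LCS(σ,τ)`. -/
noncomputable def ulamDist (x y : List ℕ) : ℕ := x.length - LCS x y

/-- `π` is a permutation of `[n] = {1,…,n}` viewed as a string. -/
def IsPermOf (n : ℕ) (π : List ℕ) : Prop := π.Perm (List.range' 1 n)

/-- The coordinate gadget `C_A`. -/
def CA (x : Fin 2) : List ℕ := if x = 0 then [1, 2, 3] else [3, 1, 2]

/-- The coordinate gadget `C_B`. -/
def CB (y : Fin 2) : List ℕ := if y = 0 then [1, 3, 2] else [2, 1, 3]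

/-- `Δ_k(s)`: add `k` to every symbol of `s`. -/
def shift (k : ℕ) (s : List ℕ) : List ℕ := s.map (· + k)

/-- The vector gadget `V_A`: concatenation of shifted coordinate gadgets. -/
def VA (d : ℕ) (a : Fin d → Fin 2) : List ℕ :=
  ((List.finRange d).map fun i => shift (3 * i.val) (CA (a i))).flatten

/-- The vector gadget `V_B`: concatenation of shifted coordinate gadgets. -/
def VB (d : ℕ) (b : Fin d → Fin 2) : List ℕ :=
  ((List.finRange d).map fun i => shift (3 * i.val) (CB (b i))).flatten

-- ===== LCS basic API =====

lemma lcs_nonempty (x y : List ℕ) :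
    {k | ∃ s : List ℕ, s.Sublist x ∧ s.Sublist y ∧ s.length = k}.Nonempty :=
  ⟨0, [], List.nil_sublist _, List.nil_sublist _, rfl⟩

lemma lcs_bdd (x y : List ℕ) :
    BddAbove {k | ∃ s : List ℕ, s.Sublist x ∧ s.Sublist y ∧ s.length = k} :=
  ⟨x.length, by rintro k ⟨s, hx, _, rfl⟩; exact hx.length_le⟩

lemma le_LCS {x y s : List ℕ} (hx : s.Sublist x) (hy : s.Sublist y) :
    s.length ≤ LCS x y :=
  le_csSup (lcs_bdd x y) ⟨s, hx, hy, rfl⟩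

lemma LCS_le {x y : List ℕ} {n : ℕ}
    (h : ∀ s : List ℕ, s.Sublist x → s.Sublist y → s.length ≤ n) : LCS x y ≤ n :=
  csSup_le (lcs_nonempty x y) (by rintro k ⟨s, hx, hy, rfl⟩; exact h s hx hy)

lemma exists_LCS (x y : List ℕ) :
    ∃ s : List ℕ, s.Sublist x ∧ s.Sublist y ∧ s.length = LCS x y :=
  Nat.sSup_mem (lcs_nonempty x y) (lcs_bdd x y)

lemma LCS_nil : LCS [] [] = 0 :=
  Nat.le_antisymm (LCS_le fun s hs _ => by simp [List.sublist_nil.mp hs]) (Nat.zero_le _)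

lemma LCS_eq_of {x y w : List ℕ} {n : ℕ} (hwx : w.Sublist x) (hwy : w.Sublist y)
    (hwl : w.length = n) (h : ∀ s ∈ x.sublists, s.Sublist y → s.length ≤ n) :
    LCS x y = n :=
  le_antisymm (LCS_le fun s hx hy => h s (List.mem_sublists.mpr hx) hy)
    (hwl ▸ le_LCS hwx hwy)

-- ===== splitting lemma =====

lemma len_le_of_split {c : ℕ} {s1 s2 t1 t2 : List ℕ} (h : s1 ++ s2 = t1 ++ t2)
    (hs2 : ∀ v ∈ s2, c ≤ v) (ht1 : ∀ v ∈ t1, v < c) : t1.length ≤ s1.length := by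
  by_contra hlt
  push_neg at hlt
  have hidx : s1.length < (s1 ++ s2).length := by
    rw [h, List.length_append]; omega
  set v := (s1 ++ s2)[s1.length]'hidx with hv
  have hv2 : v ∈ s2 := by
    rw [hv, List.getElem_append_right (Nat.le_refl _)]
    exact List.getElem_mem _
  have hv1 : v ∈ t1 := by
    have heq : v = (t1 ++ t2)[s1.length]'(h ▸ hidx) := by
      rw [hv]; exact List.getElem_of_eq h _
    rw [heq, List.getElem_append_left hlt]
    exact List.getElem_mem _
  exact absurd (ht1 v hv1) (not_lt.mpr (hs2 v hv2))

lemma LCS_append {c : ℕ} {x1 x2 y1 y2 : List ℕ}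
    (hx1 : ∀ v ∈ x1, v < c) (hy1 : ∀ v ∈ y1, v < c)
    (hx2 : ∀ v ∈ x2, c ≤ v) (hy2 : ∀ v ∈ y2, c ≤ v) :
    LCS (x1 ++ x2) (y1 ++ y2) = LCS x1 y1 + LCS x2 y2 := by
  apply le_antisymm
  · apply LCS_le
    intro s hx hy
    obtain ⟨s1, s2, rfl, hs1, hs2⟩ := List.sublist_append_iff.mp hx
    obtain ⟨t1, t2, heq, ht1, ht2⟩ := List.sublist_append_iff.mp hy
    have hs1c : ∀ v ∈ s1, v < c := fun v hv => hx1 v (hs1.subset hv)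
    have hs2c : ∀ v ∈ s2, c ≤ v := fun v hv => hx2 v (hs2.subset hv)
    have ht1c : ∀ v ∈ t1, v < c := fun v hv => hy1 v (ht1.subset hv)
    have ht2c : ∀ v ∈ t2, c ≤ v := fun v hv => hy2 v (ht2.subset hv)
    have l1 : t1.length ≤ s1.length := len_le_of_split heq hs2c ht1c
    have l2 : s1.length ≤ t1.length := len_le_of_split heq.symm ht2c hs1c
    obtain ⟨rfl, rfl⟩ := List.append_inj heq (le_antisymm l2 l1)
    rw [List.length_append]
    exact Nat.add_le_add (le_LCS hs1 ht1) (le_LCS hs2 ht2)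
  · obtain ⟨s1, h1x, h1y, h1l⟩ := exists_LCS x1 y1
    obtain ⟨s2, h2x, h2y, h2l⟩ := exists_LCS x2 y2
    have := le_LCS (h1x.append h2x) (h1y.append h2y)
    simpa [h1l, h2l] using this

-- ===== shift invariance =====

lemma LCS_shift (k : ℕ) (x y : List ℕ) : LCS (shift k x) (shift k y) = LCS x y := by
  unfold LCS shift
  congr 1
  ext n
  constructor
  · rintro ⟨s, hx, hy, rfl⟩
    obtain ⟨t, ht, rfl⟩ := List.sublist_map_iff.mp hx
    obtain ⟨u, hu, he⟩ := List.sublist_map_iff.mp hy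
    have hinj : Function.Injective (· + k) := add_left_injective k
    have : t = u := List.map_injective_iff.mpr hinj he
    exact ⟨t, ht, this ▸ hu, by simp⟩
  · rintro ⟨s, hx, hy, rfl⟩
    exact ⟨s.map (· + k), hx.map _, hy.map _, by simp⟩

-- ===== block computations =====

lemma LCS_block (x y : Fin 2) : LCS (CA x) (CB y) = 2 - (x : ℕ) * (y : ℕ) := by
  fin_cases x <;> fin_cases y <;> simp only [CA, CB] <;> norm_num
  · exact LCS_eq_of (w := [1, 3]) (by decide) (by decide) rfl (by decide)
  · exact LCS_eq_of (w := [1, 3]) (by decide) (by decide) rfl (by decide)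
  · exact LCS_eq_of (w := [1, 2]) (by decide) (by decide) rfl (by decide)
  · exact LCS_eq_of (w := [1]) (by decide) (by decide) rfl (by decide)

-- ===== structure of VA / VB =====

lemma VA_succ (d : ℕ) (a : Fin (d + 1) → Fin 2) :
    VA (d + 1) a = CA (a 0) ++ shift 3 (VA d fun i => a i.succ) := by
  unfold VA shift
  rw [List.finRange_succ]
  simp only [List.map_cons, List.flatten_cons, List.map_map, List.map_flatten]
  congr 1
  · simp
  · congr 1
    apply List.map_congr_left
    intro i _
    simp only [Function.comp, List.map_map, Fin.val_succ]
    apply List.map_congr_left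
    intro x _
    simp only [Function.comp]
    omega

lemma VB_succ (d : ℕ) (b : Fin (d + 1) → Fin 2) :
    VB (d + 1) b = CB (b 0) ++ shift 3 (VB d fun i => b i.succ) := by
  unfold VB shift
  rw [List.finRange_succ]
  simp only [List.map_cons, List.flatten_cons, List.map_map, List.map_flatten]
  congr 1
  · simp
  · congr 1
    apply List.map_congr_left
    intro i _
    simp only [Function.comp, List.map_map, Fin.val_succ]
    apply List.map_congr_left
    intro x _
    simp only [Function.comp]
    omega

lemma shift3_range' (n : ℕ) :
    List.map (· + 3) (List.range' 1 n) = List.range' 4 n := by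
  have h : List.map (· + 3) (List.range' 1 n) = List.map (3 + ·) (List.range' 1 n) :=
    List.map_congr_left fun x _ => Nat.add_comm x 3
  rw [h, List.map_add_range']

lemma CA_perm (v : Fin 2) : (CA v).Perm (List.range' 1 3) := by
  fin_cases v <;> decide

lemma CB_perm (v : Fin 2) : (CB v).Perm (List.range' 1 3) := by
  fin_cases v <;> decide

lemma CA_lt (v : Fin 2) : ∀ u ∈ CA v, u < 4 := by
  fin_cases v <;> decide

lemma CB_lt (v : Fin 2) : ∀ u ∈ CB v, u < 4 := by
  fin_cases v <;> decide

lemma range'_split (n : ℕ) :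
    List.range' 1 3 ++ List.range' 4 (3 * n) = List.range' 1 (3 * (n + 1)) := by
  have h := @List.range'_append 1 3 (3 * n) 1
  norm_num at h
  rw [show 3 * (n + 1) = 3 * n + 3 by ring]
  rwa [Nat.add_comm] at h

lemma VA_perm (d : ℕ) (a : Fin d → Fin 2) :
    (VA d a).Perm (List.range' 1 (3 * d)) := by
  induction d with
  | zero => simp [VA]
  | succ n ih =>
    rw [VA_succ]
    have h1 : (CA (a 0)).Perm (List.range' 1 3) := CA_perm _
    have h2 : (shift 3 (VA n fun i => a i.succ)).Perm (List.range' 4 (3 * n)) := by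
      have := (ih fun i => a i.succ).map (· + 3)
      rwa [shift3_range'] at this
    have := h1.append h2
    rwa [range'_split] at this

lemma VB_perm (d : ℕ) (b : Fin d → Fin 2) :
    (VB d b).Perm (List.range' 1 (3 * d)) := by
  induction d with
  | zero => simp [VB]
  | succ n ih =>
    rw [VB_succ]
    have h1 : (CB (b 0)).Perm (List.range' 1 3) := CB_perm _
    have h2 : (shift 3 (VB n fun i => b i.succ)).Perm (List.range' 4 (3 * n)) := by
      have := (ih fun i => b i.succ).map (· + 3)
      rwa [shift3_range'] at this
    have := h1.append h2
    rwa [range'_split] at this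

lemma VA_mem_ge (d : ℕ) (a : Fin d → Fin 2) : ∀ v ∈ VA d a, 1 ≤ v := by
  intro v hv
  have := (VA_perm d a).subset hv
  rw [List.mem_range'] at this
  obtain ⟨i, _, rfl⟩ := this
  omega

lemma VB_mem_ge (d : ℕ) (b : Fin d → Fin 2) : ∀ v ∈ VB d b, 1 ≤ v := by
  intro v hv
  have := (VB_perm d b).subset hv
  rw [List.mem_range'] at this
  obtain ⟨i, _, rfl⟩ := this
  omega

-- ===== main LCS computation =====

lemma LCS_VA_VB (d : ℕ) (a b : Fin d → Fin 2) :
    LCS (VA d a) (VB d b) = ∑ i, (2 - (a i : ℕ) * (b i : ℕ)) := by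
  induction d with
  | zero => simpa [VA, VB] using LCS_nil
  | succ n ih =>
    rw [VA_succ, VB_succ]
    rw [LCS_append (c := 4) ?h1 ?h2 ?h3 ?h4]
    · rw [LCS_shift, LCS_block, ih, Fin.sum_univ_succ]
    case h1 => exact CA_lt _
    case h2 => exact CB_lt _
    case h3 =>
      intro v hv
      simp only [shift, List.mem_map] at hv
      obtain ⟨u, hu, rfl⟩ := hv
      have := VA_mem_ge n _ u hu
      omega
    case h4 =>
      intro v hv
      simp only [shift, List.mem_map] at hv
      obtain ⟨u, hu, rfl⟩ := hv
      have := VB_mem_ge n _ u hu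
      omega

theorem vector_gadgets (d : ℕ) (a b : Fin d → Fin 2) :
    IsPermOf (3 * d) (VA d a) ∧ IsPermOf (3 * d) (VB d b) ∧
      LCS (VA d a) (VB d b) = 2 * d - ∑ i, (a i : ℕ) * (b i : ℕ) := by
  refine ⟨VA_perm d a, VB_perm d b, ?_⟩
  rw [LCS_VA_VB]
  have hle : ∀ i : Fin d, (a i : ℕ) * (b i : ℕ) ≤ 2 := by
    intro i
    have h1 : (a i : ℕ) ≤ 1 := Fin.is_le _
    have h2 : (b i : ℕ) ≤ 1 := Fin.is_le _
    calc (a i : ℕ) * (b i : ℕ) ≤ 1 * 1 := Nat.mul_le_mul h1 h2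
    _ ≤ 2 := by omega
  have key : (∑ i, (2 - (a i : ℕ) * (b i : ℕ))) + ∑ i, (a i : ℕ) * (b i : ℕ) = 2 * d := by
    rw [← Finset.sum_add_distrib]
    have : ∀ i ∈ Finset.univ, (2 - (a i : ℕ) * (b i : ℕ)) + (a i : ℕ) * (b i : ℕ) = 2 :=
      fun i _ => by have := hle i; omega
    rw [Finset.sum_congr rfl this, Finset.sum_const, Finset.card_univ, Fintype.card_fin,
      smul_eq_mul, Nat.mul_comm]
  have hble : ∑ i, (a i : ℕ) * (b i : ℕ) ≤ 2 * d := by omega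
  omega
end

section
/- Fix n and let N = 3n+2. Let X₁ = (n+1)(n+2)⋯(2n+1) and X₂ = (2n+2)(2n+3)⋯(3n+2). Define π^L = 1∘2∘⋯∘n ∘ X₁ ∘ X₂ and π^R = X₁ ∘ n∘(n−1)∘⋯∘1 ∘ X₂. For a partition A ⊔ B = [n] with A = {a₁ < a₂ < ⋯ < a_r} and B = {b₁ > b₂ > ⋯ > b_{n−r}}, define π^{A,B} = a₁⋯a_r ∘ X₁ ∘ b₁⋯b_{n−r} ∘ X₂. Then d_U(π^{A,B}, π^L) + d_U(π^{A,B}, π^R) = n; specifically d_U(π^{A,B}, π^L) = n − r and d_U(π^{A,B}, π^R) = r. -/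
private lemma lcs_eq {x y : List ℕ} {m : ℕ}
    (h1 : ∃ s : List ℕ, s.Sublist x ∧ s.Sublist y ∧ s.length = m)
    (h2 : ∀ s : List ℕ, s.Sublist x → s.Sublist y → s.length ≤ m) :
    LCS x y = m := by
  have hub : m ∈ upperBounds {k | ∃ s : List ℕ, s.Sublist x ∧ s.Sublist y ∧ s.length = k} := by
    rintro k ⟨s, hx, hy, rfl⟩
    exact h2 s hx hy
  exact le_antisymm (csSup_le ⟨m, h1⟩ hub) (le_csSup ⟨m, hub⟩ h1)

private lemma asc_desc_len {l : List ℕ} (h1 : l.Pairwise (· < ·)) (h2 : l.Pairwise (· > ·)) :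
    l.length ≤ 1 := by
  match l with
  | [] => simp
  | [x] => simp
  | x :: y :: t =>
    have h1' := (List.pairwise_cons.1 h1).1 y (by simp)
    have h2' := (List.pairwise_cons.1 h2).1 y (by simp)
    omega

private lemma sub_of_sorted {r : ℕ → ℕ → Prop} (hr : ∀ x y, r x y → ¬ r y x)
    {l m : List ℕ} (hl : l.Pairwise r) (hm : m.Pairwise r) (h : l ⊆ m) : List.Sublist l m := by
  haveI : Std.Antisymm r := ⟨fun x y h1 h2 => (hr x y h1 h2).elim⟩
  haveI : IsIrrefl ℕ r := ⟨fun x h => hr x x h h⟩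
  exact List.sublist_of_subperm_of_pairwise
    (List.subperm_of_subset (List.Pairwise.nodup hl) h) hl hm

theorem legal_cut_permutation_cost (n : ℕ)
    (X1 X2 piL piR : List ℕ)
    (hX1 : X1 = List.range' (n + 1) (n + 1)) (hX2 : X2 = List.range' (2 * n + 2) (n + 1))
    (hL : piL = List.range' 1 n ++ X1 ++ X2)
    (hR : piR = X1 ++ (List.range' 1 n).reverse ++ X2)
    (a b : List ℕ) (ha : a.Pairwise (· < ·)) (hb : b.Pairwise (· > ·))
    (hab : (a ++ b).Perm (List.range' 1 n))
    (piAB : List ℕ) (hAB : piAB = a ++ X1 ++ b ++ X2) :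
    ulamDist piAB piL = n - a.length ∧ ulamDist piAB piR = a.length ∧
      ulamDist piAB piL + ulamDist piAB piR = n := by
  set r := a.length with hr
  -- basic membership facts
  have hmema : ∀ x ∈ a, 1 ≤ x ∧ x ≤ n := by
    intro x hx
    have := hab.subset (List.mem_append.2 (Or.inl hx))
    rw [List.mem_range'_1] at this; omega
  have hmemb : ∀ x ∈ b, 1 ≤ x ∧ x ≤ n := by
    intro x hx
    have := hab.subset (List.mem_append.2 (Or.inr hx))
    rw [List.mem_range'_1] at this; omega
  have hmemX1 : ∀ x ∈ X1, n + 1 ≤ x ∧ x ≤ 2 * n + 1 := by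
    intro x hx; rw [hX1, List.mem_range'_1] at hx; omega
  have hmemX2 : ∀ x ∈ X2, 2 * n + 2 ≤ x := by
    intro x hx; rw [hX2, List.mem_range'_1] at hx; omega
  have hlen : a.length + b.length = n := by
    have := hab.length_eq; simpa using this
  have hrn : r ≤ n := by omega
  have hX1len : X1.length = n + 1 := by rw [hX1]; simp
  have hX2len : X2.length = n + 1 := by rw [hX2]; simp
  have hABlen : piAB.length = 3 * n + 2 := by
    rw [hAB]; simp [hX1len, hX2len]; omega
  -- piL is sorted
  have hLsorted : piL.Pairwise (· < ·) := by
    rw [hL]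
    rw [List.pairwise_append, List.pairwise_append]
    refine ⟨⟨List.pairwise_lt_range' (s := 1) (n := n), hX1 ▸ List.pairwise_lt_range' (s := n + 1) (n := n + 1), ?_⟩,
      hX2 ▸ List.pairwise_lt_range' (s := 2 * n + 2) (n := n + 1), ?_⟩
    · intro x hx y hy
      rw [List.mem_range'_1] at hx
      have := hmemX1 y hy
      omega
    · intro x hx y hy
      have hy2 := hmemX2 y hy
      rw [List.mem_append] at hx
      rcases hx with h | h
      · rw [List.mem_range'_1] at h; omega
      · have := hmemX1 x h; omega
  have hrev : ((List.range' 1 n).reverse).Pairwise (· > ·) := by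
    rw [List.pairwise_reverse]
    exact List.pairwise_lt_range' (s := 1) (n := n)
  -- a is a sublist of range' 1 n
  have ha_sub : List.Sublist (a) (List.range' 1 n) := by
    refine sub_of_sorted (fun x y h h' => by omega) ha (List.pairwise_lt_range' (s := 1) (n := n)) ?_
    intro x hx; rw [List.mem_range'_1]; have := hmema x hx; omega
  -- b is a sublist of (range' 1 n).reverse
  have hb_sub : List.Sublist (b) ((List.range' 1 n).reverse) := by
    refine sub_of_sorted (fun x y (h : x > y) (h' : y > x) => by omega) hb hrev ?_
    intro x hx; rw [List.mem_reverse, List.mem_range'_1]; have := hmemb x hx; omega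
  -- LCS with piL
  have hLCSL : LCS piAB piL = r + (n + 1) + (n + 1) := by
    apply lcs_eq
    · refine ⟨a ++ X1 ++ X2, ?_, ?_, by simp [hX1len, hX2len]; omega⟩
      · rw [hAB]
        exact ((List.sublist_append_left (a ++ X1) b).append_right X2)
      · rw [hL]
        exact ((ha_sub.append_right X1).append_right X2)
    · intro s hsAB hsL
      have hssorted : s.Pairwise (· < ·) := hLsorted.sublist hsL
      rw [hAB, show a ++ X1 ++ b ++ X2 = a ++ (X1 ++ (b ++ X2)) by
        simp [List.append_assoc]] at hsAB
      obtain ⟨s1, t, rfl, hs1, ht⟩ := List.sublist_append_iff.1 hsAB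
      obtain ⟨s2, u, rfl, hs2, hu⟩ := List.sublist_append_iff.1 ht
      obtain ⟨s3, s4, rfl, hs3, hs4⟩ := List.sublist_append_iff.1 hu
      have l1 : s1.length ≤ r := hs1.length_le
      have l2 : s2.length ≤ n + 1 := by have := hs2.length_le; omega
      have l4 : s4.length ≤ n + 1 := by have := hs4.length_le; omega
      -- s3 is ascending (as sublist of sorted s) and descending (sublist of b)
      have hs3s : List.Sublist (s3) (s1 ++ (s2 ++ (s3 ++ s4))) := by
        refine List.Sublist.trans ?_ (List.sublist_append_right s1 _)
        refine List.Sublist.trans ?_ (List.sublist_append_right s2 _)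
        exact List.sublist_append_left s3 s4
      have l3 : s3.length ≤ 1 :=
        asc_desc_len (hssorted.sublist hs3s) (hb.sublist hs3)
      -- s2 and s3 cannot both be nonempty
      have hdisj : s2 = [] ∨ s3 = [] := by
        by_contra hcon
        push_neg at hcon
        obtain ⟨h2ne, h3ne⟩ := hcon
        obtain ⟨y, s2', rfl⟩ := List.exists_cons_of_ne_nil h2ne
        obtain ⟨z, s3', rfl⟩ := List.exists_cons_of_ne_nil h3ne
        have hyz : List.Sublist ([y, z]) ((y :: s2') ++ (z :: s3')) :=
          List.Sublist.append (List.cons_sublist_cons.2 (List.nil_sublist _))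
            (List.cons_sublist_cons.2 (List.nil_sublist _))
        have hyzsub : List.Sublist ([y, z]) (s1 ++ ((y :: s2') ++ ((z :: s3') ++ s4))) := by
          refine hyz.trans ?_
          refine List.Sublist.trans ?_ (List.sublist_append_right s1 _)
          simpa [List.append_assoc] using
            (List.sublist_append_left ((y :: s2') ++ (z :: s3')) s4)
        have hlt : y < z := by
          have := hssorted.sublist hyzsub
          exact (List.pairwise_cons.1 this).1 z (by simp)
        have hy := hmemX1 y (hs2.subset (by simp))
        have hz := hmemb z (hs3.subset (by simp))
        omega
      simp only [List.length_append]
      rcases hdisj with h | h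
      · have : s2.length = 0 := by rw [h]; rfl
        omega
      · have : s3.length = 0 := by rw [h]; rfl
        omega
  -- LCS with piR
  have hLCSR : LCS piAB piR = (n + 1) + (n - r) + (n + 1) := by
    apply lcs_eq
    · refine ⟨X1 ++ b ++ X2, ?_, ?_, by simp [hX1len, hX2len]; omega⟩
      · rw [hAB, show a ++ X1 ++ b ++ X2 = a ++ (X1 ++ b) ++ X2 by simp [List.append_assoc]]
        exact ((List.sublist_append_right a (X1 ++ b)).append_right X2)
      · rw [hR]
        exact (((List.Sublist.refl X1).append hb_sub).append_right X2)
    · intro s hsAB hsR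
      rw [hAB, show a ++ X1 ++ b ++ X2 = a ++ (X1 ++ (b ++ X2)) by
        simp [List.append_assoc]] at hsAB
      obtain ⟨s1, t, rfl, hs1, ht⟩ := List.sublist_append_iff.1 hsAB
      obtain ⟨s2, u, rfl, hs2, hu⟩ := List.sublist_append_iff.1 ht
      obtain ⟨s3, s4, rfl, hs3, hs4⟩ := List.sublist_append_iff.1 hu
      have l2 : s2.length ≤ n + 1 := by have := hs2.length_le; omega
      have l3 : s3.length ≤ n - r := by have := hs3.length_le; omega
      have l4 : s4.length ≤ n + 1 := by have := hs4.length_le; omega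
      -- s1 is descending: its elements are ≤ n, so filtering piR keeps only the reversed part
      have hs1R : List.Sublist s1 piR := (List.sublist_append_left s1 _).trans hsR
      have hs1rev : List.Sublist (s1) ((List.range' 1 n).reverse) := by
        have hf := hs1R.filter (fun x => decide (x ≤ n))
        have e1 : List.filter (fun x => decide (x ≤ n)) s1 = s1 :=
          List.filter_eq_self.2 (fun x hx => by
            have := hmema x (hs1.subset hx); simp; omega)
        have eX1 : List.filter (fun x => decide (x ≤ n)) X1 = [] :=
          List.filter_eq_nil_iff.2 (fun x hx => by have := hmemX1 x hx; simp; omega)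
        have eX2 : List.filter (fun x => decide (x ≤ n)) X2 = [] :=
          List.filter_eq_nil_iff.2 (fun x hx => by have := hmemX2 x hx; simp; omega)
        have erev : List.filter (fun x => decide (x ≤ n)) (List.range' 1 n).reverse
            = (List.range' 1 n).reverse :=
          List.filter_eq_self.2 (fun x hx => by
            rw [List.mem_reverse, List.mem_range'_1] at hx; simp; omega)
        have e2 : List.filter (fun x => decide (x ≤ n)) piR = (List.range' 1 n).reverse := by
          rw [hR, List.filter_append, List.filter_append, eX1, eX2, erev]
          simp
        rwa [e1, e2] at hf
      have l1 : s1.length ≤ 1 := asc_desc_len (ha.sublist hs1) (hrev.sublist hs1rev)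
      -- s1 and s2 cannot both be nonempty
      have hdisj : s1 = [] ∨ s2 = [] := by
        by_contra hcon
        push_neg at hcon
        obtain ⟨h1ne, h2ne⟩ := hcon
        obtain ⟨y, s1', rfl⟩ := List.exists_cons_of_ne_nil h1ne
        obtain ⟨z, s2', rfl⟩ := List.exists_cons_of_ne_nil h2ne
        have hy := hmema y (hs1.subset (by simp))
        have hz := hmemX1 z (hs2.subset (by simp))
        have hyz : List.Sublist ([y, z]) ((y :: s1') ++ ((z :: s2') ++ (s3 ++ s4))) := by
          refine List.Sublist.append (List.cons_sublist_cons.2 (List.nil_sublist _)) ?_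
          exact (List.cons_sublist_cons.2 (List.nil_sublist _)).trans
            (List.sublist_append_left (z :: s2') (s3 ++ s4))
        have hyzR : List.Sublist ([y, z]) (X1 ++ ((List.range' 1 n).reverse ++ X2)) := by
          refine (hyz.trans hsR).trans ?_
          rw [hR]; simp [List.append_assoc]
        obtain ⟨t1, t2, heq, ht1, ht2⟩ := List.sublist_append_iff.1 hyzR
        rcases t1 with _ | ⟨w, t1'⟩
        · simp only [List.nil_append] at heq
          have hzmem := ht2.subset (show z ∈ t2 by rw [← heq]; simp)
          rw [List.mem_append, List.mem_reverse, List.mem_range'_1] at hzmem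
          rcases hzmem with h | h
          · omega
          · have := hmemX2 z h; omega
        · have hw := hmemX1 w (ht1.subset (by simp))
          have : w = y := by
            simpa using congrArg (fun l => l.head?) heq.symm
          omega
      simp only [List.length_append]
      have e1 : s1.length ≤ 1 := l1
      rcases hdisj with h | h
      · have : s1.length = 0 := by rw [h]; rfl
        omega
      · have : s2.length = 0 := by rw [h]; rfl
        omega
  refine ⟨?_, ?_, ?_⟩ <;> simp only [ulamDist, hLCSL, hLCSR, hABlen] <;> omega
end

section
/- With the notation of the Max-Cut reduction (N = 3n+2, X₁ = (n+1)⋯(2n+1), X₂ = (2n+2)⋯(3n+2), π^L = 1⋯n ∘ X₁ ∘ X₂, π^R = X₁ ∘ n⋯1 ∘ X₂), every permutation π ∈ S_N that is not of the form π^{A,B} for some partition A ⊔ B = [n] satisfies d_U(π, π^L) + d_U(π, π^R) ≥ n + 1. -/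
namespace IllegalAux

open List

lemma filter_mem_eq : ∀ {l s : List ℕ}, s.Sublist l → l.Nodup →
    l.filter (fun x => decide (x ∈ s)) = s := by
  intro l s h
  induction h with
  | slnil => intro _; simp
  | @cons l₁ l₂ a h ih =>
    intro hn
    have ha : a ∉ l₂ := (List.nodup_cons.1 hn).1
    have ha1 : a ∉ l₁ := fun hx => ha (h.subset hx)
    rw [List.filter_cons, if_neg (by simpa using ha1)]
    exact ih (List.nodup_cons.1 hn).2
  | @cons_cons l₁ l₂ a h ih =>
    intro hn
    have ha : a ∉ l₂ := (List.nodup_cons.1 hn).1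
    rw [List.filter_cons, if_pos (by simp)]
    have : l₂.filter (fun x => decide (x ∈ a :: l₁)) = l₂.filter (fun x => decide (x ∈ l₁)) := by
      apply List.filter_congr
      intro x hx
      have : x ≠ a := fun hxa => ha (hxa ▸ hx)
      simp [this]
    rw [this, ih (List.nodup_cons.1 hn).2]

lemma pair_sublist {x y : ℕ} {l₁ l₂ : List ℕ} (hx : x ∈ l₁) (hy : y ∈ l₂) :
    [x, y].Sublist (l₁ ++ l₂) :=
  (List.singleton_sublist.2 hx).append (List.singleton_sublist.2 hy)

lemma before_trans : ∀ {l : List ℕ}, l.Nodup → ∀ {x y z : ℕ},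
    [x, y].Sublist l → [y, z].Sublist l → [x, z].Sublist l := by
  intro l
  induction l with
  | nil => intro _ x y z h1 _; exact absurd h1 (by simp)
  | cons a l ih =>
    intro hl x y z h1 h2
    have ha : a ∉ l := (List.nodup_cons.1 hl).1
    have hl' : l.Nodup := (List.nodup_cons.1 hl).2
    cases h1 with
    | cons _ h1' =>
      cases h2 with
      | cons _ h2' => exact (ih hl' h1' h2').cons a
      | cons_cons _ h2' =>
        -- here y = a; but y ∈ l from h1'
        have : a ∈ l := (List.singleton_sublist.1 ((List.sublist_cons_self x [a]).trans h1'))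
        exact absurd this ha
    | cons_cons _ h1' =>
      -- here x = a, h1' : [y] <+ l
      cases h2 with
      | cons _ h2' =>
        have : [z].Sublist l := (List.sublist_cons_self y [z]).trans h2'
        exact this.cons_cons a
      | cons_cons _ h2' =>
        -- here y = a, but [y] <+ l
        exact absurd (List.singleton_sublist.1 h1') ha

lemma not_before_both {l : List ℕ} (hl : l.Nodup) {x y : ℕ}
    (h1 : [x, y].Sublist l) (h2 : [y, x].Sublist l) : False := by
  have h3 : [x, x].Sublist l := before_trans hl h1 h2
  have := h3.nodup hl
  simp at this

lemma split_of_before {l : List ℕ} (p : ℕ → Bool)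
    (h : ∀ y ∈ l, ∀ x ∈ l, p y = false → p x = true → ¬ [y, x].Sublist l) :
    l = l.filter p ++ l.filter (fun x => ! p x) := by
  induction l with
  | nil => simp
  | cons a l ih =>
    have h' : ∀ y ∈ l, ∀ x ∈ l, p y = false → p x = true → ¬ [y, x].Sublist l := by
      intro y hy x hx hpy hpx hs
      exact h y (List.mem_cons_of_mem _ hy) x (List.mem_cons_of_mem _ hx) hpy hpx (hs.cons a)
    by_cases hpa : p a = true
    · rw [List.filter_cons, if_pos hpa, List.filter_cons, if_neg (by simp [hpa])]
      simpa using ih h'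
    · have hpaf : p a = false := by simpa using hpa
      have hall : ∀ x ∈ l, p x = false := by
        intro x hx
        by_contra hb
        have hbx : p x = true := by simpa using hb
        exact h a (List.mem_cons_self) x (List.mem_cons_of_mem _ hx) hpaf hbx
          ((List.singleton_sublist.2 hx).cons_cons a)
      have h1 : (a :: l).filter p = [] := by
        rw [List.filter_eq_nil_iff]
        intro x hx
        rcases List.mem_cons.1 hx with rfl | hx
        · simp [hpaf]
        · simp [hall x hx]
      have h2 : (a :: l).filter (fun x => ! p x) = a :: l := by
        rw [List.filter_eq_self]
        intro x hx
        rcases List.mem_cons.1 hx with rfl | hx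
        · simp [hpaf]
        · simp [hall x hx]
      rw [h1, h2]; simp

lemma short {l : List ℕ} (h1 : l.Pairwise (· < ·)) (h2 : l.Pairwise (· > ·)) :
    l.length ≤ 1 := by
  match l with
  | [] => simp
  | [a] => simp
  | a :: b :: l =>
    have hab : a < b := (List.pairwise_cons.1 h1).1 b (by simp)
    have hba : a > b := (List.pairwise_cons.1 h2).1 b (by simp)
    omega

lemma sorted_pair : ∀ {l : List ℕ}, l.Pairwise (· < ·) → ∀ {x y : ℕ},
    x ∈ l → y ∈ l → x < y → [x, y].Sublist l := by
  intro l
  induction l with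
  | nil => intro _ x y hx; simp at hx
  | cons a l ih =>
    intro h x y hx hy hxy
    have hpa : ∀ b ∈ l, a < b := (List.pairwise_cons.1 h).1
    have hpl : l.Pairwise (· < ·) := (List.pairwise_cons.1 h).2
    by_cases hxa : x = a
    · subst hxa
      have hy' : y ∈ l := by
        rcases List.mem_cons.1 hy with h' | h'
        · omega
        · exact h'
      exact (List.singleton_sublist.2 hy').cons_cons x
    · have hx' : x ∈ l := by
        rcases List.mem_cons.1 hx with h' | h'
        · exact absurd h' hxa
        · exact h'
      have hy' : y ∈ l := by
        rcases List.mem_cons.1 hy with h' | h'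
        · exfalso; have := hpa x hx'; omega
        · exact h'
      exact (ih hpl hx' hy' hxy).cons a

end IllegalAux

theorem illegal_permutation_cost (n : ℕ)
    (X1 X2 piL piR : List ℕ)
    (hX1 : X1 = List.range' (n + 1) (n + 1)) (hX2 : X2 = List.range' (2 * n + 2) (n + 1))
    (hL : piL = List.range' 1 n ++ X1 ++ X2)
    (hR : piR = X1 ++ (List.range' 1 n).reverse ++ X2)
    (π : List ℕ) (hπ : IsPermOf (3 * n + 2) π)
    (hnot : ¬ ∃ a b : List ℕ, a.Pairwise (· < ·) ∧ b.Pairwise (· > ·) ∧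
      (a ++ b).Perm (List.range' 1 n) ∧ π = a ++ X1 ++ b ++ X2) :
    ulamDist π piL + ulamDist π piR ≥ n + 1 := by
  classical
  open IllegalAux in
  by_contra hcon
  push_neg at hcon
  -- basic facts about π
  have hπnodup : π.Nodup := hπ.nodup_iff.2 (List.nodup_range' (s := 1) (n := (3 * n + 2)))
  have hπlen : π.length = 3 * n + 2 := by
    have := hπ.length_eq; simpa using this
  have hπmem : ∀ x, x ∈ π ↔ 1 ≤ x ∧ x < 3 * n + 3 := by
    intro x
    rw [hπ.mem_iff, List.mem_range'_1]
    omega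
  -- piL is the increasing word
  have e1 : List.range' 1 n ++ List.range' (n + 1) (n + 1) = List.range' 1 (2 * n + 1) := by
    have h := List.range'_append (s := 1) (m := n) (n := n + 1) (step := 1)
    rw [show 1 + 1 * n = n + 1 by ring] at h
    rw [show n + (n + 1) = 2 * n + 1 by ring] at h
    exact h
  have e2 : List.range' 1 (2 * n + 1) ++ List.range' (2 * n + 2) (n + 1)
      = List.range' 1 (3 * n + 2) := by
    have h := List.range'_append (s := 1) (m := 2 * n + 1) (n := n + 1) (step := 1)
    rw [show 1 + 1 * (2 * n + 1) = 2 * n + 2 by ring] at h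
    rw [show 2 * n + 1 + (n + 1) = 3 * n + 2 by ring] at h
    exact h
  have hLr : piL = List.range' 1 (3 * n + 2) := by
    rw [hL, hX1, hX2, e1, e2]
  -- LCS machinery
  have lcs_spec : ∀ y : List ℕ, ∃ s : List ℕ, s.Sublist π ∧ s.Sublist y ∧
      s.length = LCS π y := by
    intro y
    have hne : ({k | ∃ s : List ℕ, s.Sublist π ∧ s.Sublist y ∧ s.length = k} : Set ℕ).Nonempty :=
      ⟨0, [], by simp⟩
    have hbdd : BddAbove {k | ∃ s : List ℕ, s.Sublist π ∧ s.Sublist y ∧ s.length = k} := by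
      refine ⟨π.length, ?_⟩
      rintro k ⟨s, hs, -, rfl⟩
      exact hs.length_le
    have := Nat.sSup_mem hne hbdd
    exact this
  have lcs_le : ∀ y : List ℕ, LCS π y ≤ π.length := by
    intro y
    obtain ⟨s, h1, -, h3⟩ := lcs_spec y
    rw [← h3]
    exact h1.length_le
  obtain ⟨s, hsπ, hsL, hslen⟩ := lcs_spec piL
  obtain ⟨t, htπ, htR, htlen⟩ := lcs_spec piR
  have hLle := lcs_le piL
  have hRle := lcs_le piR
  have hst : s.length + t.length ≥ 5 * n + 4 := by
    simp only [ulamDist] at hcon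
    omega
  -- nodup / sorted facts
  have hs_nd : s.Nodup := hsπ.nodup hπnodup
  have ht_nd : t.Nodup := htπ.nodup hπnodup
  have hs_sorted : s.Pairwise (· < ·) := by
    have := hsL
    rw [hLr] at this
    exact List.Pairwise.sublist this (List.pairwise_lt_range' (s := 1) (n := 3 * n + 2))
  -- the common refinement u
  have hfs : π.filter (fun x => decide (x ∈ s)) = s := IllegalAux.filter_mem_eq hsπ hπnodup
  have hft : π.filter (fun x => decide (x ∈ t)) = t := IllegalAux.filter_mem_eq htπ hπnodup
  set u : List ℕ := π.filter (fun x => decide (x ∈ s) && decide (x ∈ t)) with hu_def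
  have hut : u.Sublist t := by
    have h1 : u = (π.filter (fun x => decide (x ∈ t))).filter (fun x => decide (x ∈ s)) := by
      rw [List.filter_filter]
    rw [h1, hft]
    exact List.filter_sublist
  have hus : u.Sublist s := by
    have h1 : u = (π.filter (fun x => decide (x ∈ s))).filter (fun x => decide (x ∈ t)) := by
      rw [List.filter_filter]
      apply List.filter_congr
      intro x _
      exact Bool.and_comm _ _
    rw [h1, hfs]
    exact List.filter_sublist
  have humem : ∀ x, x ∈ u ↔ x ∈ s ∧ x ∈ t := by
    intro x
    constructor
    · intro hx
      have := List.mem_filter.1 hx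
      constructor
      · have := this.2; simp at this; exact this.1
      · have := this.2; simp at this; exact this.2
    · intro ⟨hxs, hxt⟩
      exact List.mem_filter.2 ⟨hsπ.subset hxs, by simp [hxs, hxt]⟩
  have hu_nd : u.Nodup := hπnodup.filter _
  -- |u| ≥ |s| + |t| - |π|
  have hulen : u.length + π.length ≥ s.length + t.length := by
    have hinter : u.toFinset = s.toFinset ∩ t.toFinset := by
      ext x
      simp only [List.mem_toFinset, Finset.mem_inter, humem]
    have hsub : s.toFinset ∪ t.toFinset ⊆ π.toFinset := by
      intro x hx
      rcases Finset.mem_union.1 hx with hx | hx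
      · exact List.mem_toFinset.2 (hsπ.subset (List.mem_toFinset.1 hx))
      · exact List.mem_toFinset.2 (htπ.subset (List.mem_toFinset.1 hx))
    have hcup := Finset.card_union_add_card_inter s.toFinset t.toFinset
    have hle : (s.toFinset ∪ t.toFinset).card ≤ π.toFinset.card := Finset.card_le_card hsub
    rw [List.toFinset_card_of_nodup hπnodup] at hle
    rw [List.toFinset_card_of_nodup hs_nd, List.toFinset_card_of_nodup ht_nd] at hcup
    rw [← hinter] at hcup
    rw [List.toFinset_card_of_nodup hu_nd] at hcup
    omega
  have hub : u.length ≥ 2 * n + 2 := by omega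
  -- decompose u along piR
  have huR : u.Sublist piR := hut.trans htR
  rw [hR] at huR
  obtain ⟨u12, u3, hueq, hu12, hu3⟩ := List.sublist_append_iff.1 huR
  obtain ⟨u1, u2, hu12eq, hu1, hu2⟩ := List.sublist_append_iff.1 hu12
  subst hu12eq
  have hu_sorted : u.Pairwise (· < ·) := List.Pairwise.sublist hus hs_sorted
  have hrev : ((List.range' 1 n).reverse).Pairwise (· > ·) := by
    rw [List.pairwise_reverse]
    exact List.pairwise_lt_range' (s := 1) (n := n)
  have hu1len : u1.length ≤ n + 1 := by
    have := hu1.length_le; rw [hX1] at this; simpa using this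
  have hu3len : u3.length ≤ n + 1 := by
    have := hu3.length_le; rw [hX2] at this; simpa using this
  have hu2len : u2.length ≤ 1 := by
    apply IllegalAux.short
    · have : u2.Sublist u := by
        rw [hueq]
        exact (List.sublist_append_right u1 u2).trans (List.sublist_append_left _ u3)
      exact List.Pairwise.sublist this hu_sorted
    · exact List.Pairwise.sublist hu2 hrev
  have hu2nil : u2 = [] := by
    by_contra hne
    obtain ⟨b, hb⟩ := List.exists_mem_of_ne_nil u2 hne
    have hb_small : b ≤ n := by
      have := List.mem_range'_1.1 (List.mem_reverse.1 (hu2.subset hb))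
      omega
    have hu1nil : u1 = [] := by
      by_contra hne1
      obtain ⟨a, ha⟩ := List.exists_mem_of_ne_nil u1 hne1
      have ha_big : n + 1 ≤ a := by
        have := hu1.subset ha; rw [hX1] at this
        have := List.mem_range'_1.1 this; omega
      have : a < b := by
        have h12 : (u1 ++ u2).Pairwise (· < ·) := by
          have : (u1 ++ u2).Sublist u := by rw [hueq]; exact List.sublist_append_left _ u3
          exact List.Pairwise.sublist this hu_sorted
        exact (List.pairwise_append.1 h12).2.2 a ha b hb
      omega
    have hlen : u.length = u2.length + u3.length := by
      rw [hueq, hu1nil]; simp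
    have hn0 : n = 0 := by omega
    have : u2.Sublist ([] : List ℕ) := by
      have : (List.range' 1 n).reverse = [] := by rw [hn0]; simp
      rw [← this]; exact hu2
    have := List.sublist_nil.1 this
    exact hne this
  subst hu2nil
  have hu13 : u = u1 ++ u3 := by simpa using hueq
  have hu1eq : u1 = X1 := by
    apply hu1.eq_of_length
    rw [hX1]
    have : u.length = u1.length + u3.length := by rw [hu13]; simp
    simp only [List.length_range']
    omega
  have hu3eq : u3 = X2 := by
    apply hu3.eq_of_length
    rw [hX2]
    have : u.length = u1.length + u3.length := by rw [hu13]; simp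
    simp only [List.length_range']
    omega
  have hu_eq : u = X1 ++ X2 := by rw [hu13, hu1eq, hu3eq]
  -- no small value is in both s and t
  have hsmall : ∀ x, x ∈ s → x ∈ t → n + 1 ≤ x := by
    intro x hxs hxt
    have hxu : x ∈ u := (humem x).2 ⟨hxs, hxt⟩
    rw [hu_eq] at hxu
    rcases List.mem_append.1 hxu with hx | hx
    · rw [hX1] at hx; have := List.mem_range'_1.1 hx; omega
    · rw [hX2] at hx; have := List.mem_range'_1.1 hx; omega
  -- decompose s along piL
  have hsL' := hsL
  rw [hL] at hsL'
  obtain ⟨s12, s3, hseq, hs12, hs3⟩ := List.sublist_append_iff.1 hsL'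
  obtain ⟨sA, s1, hs12eq, hsA, hs1⟩ := List.sublist_append_iff.1 hs12
  subst hs12eq
  -- decompose t along piR
  have htR' := htR
  rw [hR] at htR'
  obtain ⟨t12, t3, hteq, ht12, ht3⟩ := List.sublist_append_iff.1 htR'
  obtain ⟨t1, t2, ht12eq, ht1, ht2⟩ := List.sublist_append_iff.1 ht12
  subst ht12eq
  -- length bookkeeping
  have hs1len : s1.length ≤ n + 1 := by
    have := hs1.length_le; rw [hX1] at this; simpa using this
  have hs3len : s3.length ≤ n + 1 := by
    have := hs3.length_le; rw [hX2] at this; simpa using this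
  have ht1len : t1.length ≤ n + 1 := by
    have := ht1.length_le; rw [hX1] at this; simpa using this
  have ht3len : t3.length ≤ n + 1 := by
    have := ht3.length_le; rw [hX2] at this; simpa using this
  have hslen' : s.length = sA.length + s1.length + s3.length := by
    rw [hseq]; simp only [List.length_append]
  have htlen' : t.length = t1.length + t2.length + t3.length := by
    rw [hteq]; simp only [List.length_append]
  -- membership facts for sA and t2
  have hsAmem : ∀ x ∈ sA, 1 ≤ x ∧ x ≤ n := by
    intro x hx
    have := List.mem_range'_1.1 (hsA.subset hx); omega
  have ht2mem : ∀ x ∈ t2, 1 ≤ x ∧ x ≤ n := by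
    intro x hx
    have := List.mem_range'_1.1 (List.mem_reverse.1 (ht2.subset hx)); omega
  have hsA_s : sA.Sublist s := by
    rw [hseq]
    exact (List.sublist_append_left sA s1).trans (List.sublist_append_left _ s3)
  have ht2_t : t2.Sublist t := by
    rw [hteq]
    exact (List.sublist_append_right t1 t2).trans (List.sublist_append_left _ t3)
  have hdisj : ∀ x ∈ sA, x ∉ t2 := by
    intro x hx hxt
    have hx1 := hsAmem x hx
    have := hsmall x (hsA_s.subset hx) (ht2_t.subset hxt)
    omega
  have hsA_nd : sA.Nodup := hsA.nodup (List.nodup_range' (s := 1) (n := n))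
  have ht2_nd : t2.Nodup := ht2.nodup (List.nodup_reverse.2 (List.nodup_range' (s := 1) (n := n)))
  -- |sA| + |t2| ≤ n
  have hcard_le : sA.length + t2.length ≤ n := by
    have hFdisj : Disjoint sA.toFinset t2.toFinset := by
      rw [Finset.disjoint_left]
      intro x hx hxt
      exact hdisj x (List.mem_toFinset.1 hx) (List.mem_toFinset.1 hxt)
    have hFsub : sA.toFinset ∪ t2.toFinset ⊆ (List.range' 1 n).toFinset := by
      intro x hx
      rcases Finset.mem_union.1 hx with hx | hx
      · have := hsAmem x (List.mem_toFinset.1 hx)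
        exact List.mem_toFinset.2 (List.mem_range'_1.2 (by omega))
      · have := ht2mem x (List.mem_toFinset.1 hx)
        exact List.mem_toFinset.2 (List.mem_range'_1.2 (by omega))
    have h1 := Finset.card_le_card hFsub
    rw [Finset.card_union_of_disjoint hFdisj] at h1
    rw [List.toFinset_card_of_nodup hsA_nd, List.toFinset_card_of_nodup ht2_nd,
      List.toFinset_card_of_nodup (List.nodup_range' (s := 1) (n := n))] at h1
    simpa using h1
  -- tightness
  have ht1eq : t1 = X1 := by
    apply ht1.eq_of_length
    rw [hX1]; simp only [List.length_range']; omega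
  have ht3eq : t3 = X2 := by
    apply ht3.eq_of_length
    rw [hX2]; simp only [List.length_range']; omega
  have hcard_eq : sA.length + t2.length = n := by omega
  -- the union of sA and t2 is all of [1..n]
  have hunion : ∀ x, 1 ≤ x → x ≤ n → x ∈ sA ∨ x ∈ t2 := by
    intro x hx1 hx2
    have hFdisj : Disjoint sA.toFinset t2.toFinset := by
      rw [Finset.disjoint_left]
      intro y hy hyt
      exact hdisj y (List.mem_toFinset.1 hy) (List.mem_toFinset.1 hyt)
    have hFsub : sA.toFinset ∪ t2.toFinset ⊆ (List.range' 1 n).toFinset := by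
      intro y hy
      rcases Finset.mem_union.1 hy with hy | hy
      · have := hsAmem y (List.mem_toFinset.1 hy)
        exact List.mem_toFinset.2 (List.mem_range'_1.2 (by omega))
      · have := ht2mem y (List.mem_toFinset.1 hy)
        exact List.mem_toFinset.2 (List.mem_range'_1.2 (by omega))
    have hFeq : sA.toFinset ∪ t2.toFinset = (List.range' 1 n).toFinset := by
      apply Finset.eq_of_subset_of_card_le hFsub
      rw [Finset.card_union_of_disjoint hFdisj]
      rw [List.toFinset_card_of_nodup hsA_nd, List.toFinset_card_of_nodup ht2_nd,
        List.toFinset_card_of_nodup (List.nodup_range' (s := 1) (n := n))]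
      simp only [List.length_range']
      omega
    have : x ∈ sA.toFinset ∪ t2.toFinset := by
      rw [hFeq]
      exact List.mem_toFinset.2 (List.mem_range'_1.2 (by omega))
    rcases Finset.mem_union.1 this with h | h
    · exact Or.inl (List.mem_toFinset.1 h)
    · exact Or.inr (List.mem_toFinset.1 h)
  -- X1 ++ X2 = u is inside s; big elements of π are in s
  have hbig_mem_s : ∀ y, y ∈ π → n + 1 ≤ y → y ∈ s := by
    intro y hy hybig
    have hy3 : y < 3 * n + 3 := ((hπmem y).1 hy).2
    have : y ∈ u := by
      rw [hu_eq]
      rcases Nat.lt_or_ge y (2 * n + 2) with h | h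
      · exact List.mem_append.2 (Or.inl (by rw [hX1]; exact List.mem_range'_1.2 (by omega)))
      · exact List.mem_append.2 (Or.inr (by rw [hX2]; exact List.mem_range'_1.2 (by omega)))
    exact hus.subset this
  have hm0s : (n + 1) ∈ s := by
    apply hus.subset
    rw [hu_eq]
    exact List.mem_append.2 (Or.inl (by rw [hX1]; exact List.mem_range'_1.2 (by omega)))
  -- key ordering fact: every element of sA precedes every other element of π
  have key : ∀ x ∈ sA, ∀ y ∈ π, y ∉ sA → [x, y].Sublist π := by
    intro x hx y hy hynot
    have hxs : x ∈ s := hsA_s.subset hx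
    have hxn := hsAmem x hx
    rcases Nat.lt_or_ge y (n + 1) with hysm | hybig
    · -- y is small, hence in t2
      have hy1 : 1 ≤ y := ((hπmem y).1 hy).1
      have hyt2 : y ∈ t2 := by
        rcases hunion y hy1 (by omega) with h | h
        · exact absurd h hynot
        · exact h
      have h1 : [x, n + 1].Sublist π :=
        (IllegalAux.sorted_pair hs_sorted hxs hm0s (by omega)).trans hsπ
      have hm0t1 : (n + 1) ∈ t1 := by
        rw [ht1eq, hX1]; exact List.mem_range'_1.2 (by omega)
      have h2 : [n + 1, y].Sublist π := by
        have hp : [n + 1, y].Sublist (t1 ++ t2) := IllegalAux.pair_sublist hm0t1 hyt2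
        have : [n + 1, y].Sublist t := by
          rw [hteq]; exact hp.trans (List.sublist_append_left _ t3)
        exact this.trans htπ
      exact IllegalAux.before_trans hπnodup h1 h2
    · -- y is big, both in the sorted list s
      have hys : y ∈ s := hbig_mem_s y hy hybig
      have := IllegalAux.sorted_pair hs_sorted hxs hys (by omega)
      exact this.trans hsπ
  -- split π as sA followed by t
  have hsplit : π = π.filter (fun x => decide (x ∈ sA)) ++
      π.filter (fun x => ! decide (x ∈ sA)) := by
    apply IllegalAux.split_of_before
    intro y hy x hx hpy hpx hyx
    have hxA : x ∈ sA := of_decide_eq_true hpx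
    have hyA : y ∉ sA := of_decide_eq_false hpy
    exact IllegalAux.not_before_both hπnodup (key x hxA y hy hyA) hyx
  have hfsA : π.filter (fun x => decide (x ∈ sA)) = sA :=
    IllegalAux.filter_mem_eq (hsA_s.trans hsπ) hπnodup
  have hfnot : π.filter (fun x => ! decide (x ∈ sA)) = t := by
    rw [← hft]
    apply List.filter_congr
    intro x hx
    by_cases hxA : x ∈ sA
    · have hxt : x ∉ t := by
        intro hxt
        have h1 := hsmall x (hsA_s.subset hxA) hxt
        have h2 := hsAmem x hxA
        omega
      simp [hxA, hxt]
    · have hxt : x ∈ t := by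
        have hxr := (hπmem x).1 hx
        rcases Nat.lt_or_ge x (n + 1) with h | h
        · have : x ∈ t2 := by
            rcases hunion x (by omega) (by omega) with h' | h'
            · exact absurd h' hxA
            · exact h'
          exact ht2_t.subset this
        · rw [hteq]
          rcases Nat.lt_or_ge x (2 * n + 2) with h' | h'
          · refine List.mem_append.2 (Or.inl (List.mem_append.2 (Or.inl ?_)))
            rw [ht1eq, hX1]; exact List.mem_range'_1.2 (by omega)
          · refine List.mem_append.2 (Or.inr ?_)
            rw [ht3eq, hX2]; exact List.mem_range'_1.2 (by omega)
      simp [hxA, hxt]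
  -- contradiction with hnot
  apply hnot
  refine ⟨sA, t2, ?_, ?_, ?_, ?_⟩
  · exact List.Pairwise.sublist hsA (List.pairwise_lt_range' (s := 1) (n := n))
  · exact List.Pairwise.sublist ht2 hrev
  · rw [List.perm_ext_iff_of_nodup (List.Nodup.append hsA_nd ht2_nd hdisj)
      (List.nodup_range' (s := 1) (n := n))]
    intro a
    constructor
    · intro ha
      rcases List.mem_append.1 ha with h | h
      · have := hsAmem a h; exact List.mem_range'_1.2 (by omega)
      · have := ht2mem a h; exact List.mem_range'_1.2 (by omega)
    · intro ha
      have := List.mem_range'_1.1 ha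
      exact List.mem_append.2 (hunion a (by omega) (by omega))
  · rw [hsplit, hfsA, hfnot, hteq, ht1eq, ht3eq]
    simp [List.append_assoc]
end

section
/- Let e = {i, j} ⊆ [n] with i < j, and let π^1_e = j ∘ i ∘ X₁ ∘ X₂ ∘ (1⋯(i−1)(i+1)⋯(j−1)(j+1)⋯n) and π^2_e = X₁ ∘ i ∘ j ∘ X₂ ∘ (1⋯(i−1)(i+1)⋯(j−1)(j+1)⋯n), where X₁ = (n+1)⋯(2n+1) and X₂ = (2n+2)⋯(3n+2). Let π = π^{A,B} for a partition A ⊔ B = [n]. Then d_U(π^1_e, π) + d_U(π^2_e, π) = 2n − 2 if exactly one of i, j lies in A, and 2n − 1 otherwise. -/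
lemma egc_idx_lt {p q : List ℕ} (h : (p ++ q).Nodup) {u v : ℕ} (hu : u ∈ p) (hv : v ∈ q) :
    List.idxOf u (p ++ q) < List.idxOf v (p ++ q) := by
  have hvp : v ∉ p := fun hvp => (List.disjoint_of_nodup_append h) hvp hv
  rw [List.idxOf_append_of_mem hu, List.idxOf_append_of_notMem hvp]
  calc List.idxOf u p < p.length := List.idxOf_lt_length_iff.2 hu
    _ ≤ p.length + List.idxOf v q := Nat.le_add_right _ _

lemma egc_no_cross {s x1 x2 y1 y2 : List ℕ} (hs : s.Nodup)
    (hx : s.Sublist (x1 ++ x2)) (hy : s.Sublist (y1 ++ y2))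
    {u v : ℕ} (hu : u ∈ s) (hv : v ∈ s)
    (hux : u ∉ x2) (hvx : v ∉ x1) (huy : u ∉ y1) (hvy : v ∉ y2) : False := by
  obtain ⟨p, q, hpq, hp, hq⟩ := List.sublist_append_iff.1 hx
  obtain ⟨p', q', hpq', hp', hq'⟩ := List.sublist_append_iff.1 hy
  subst hpq
  have hup : u ∈ p := by
    rcases List.mem_append.1 hu with h | h
    · exact h
    · exact absurd (hq.subset h) hux
  have hvq : v ∈ q := by
    rcases List.mem_append.1 hv with h | h
    · exact absurd (hp.subset h) hvx
    · exact h
  have hvp' : v ∈ p' := by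
    rcases List.mem_append.1 (hpq' ▸ hv) with h | h
    · exact h
    · exact absurd (hq'.subset h) hvy
  have huq' : u ∈ q' := by
    rcases List.mem_append.1 (hpq' ▸ hu) with h | h
    · exact absurd (hp'.subset h) huy
    · exact h
  have h1 : List.idxOf u (p ++ q) < List.idxOf v (p ++ q) := egc_idx_lt hs hup hvq
  have h2 : List.idxOf v (p' ++ q') < List.idxOf u (p' ++ q') :=
    egc_idx_lt (hpq' ▸ hs) hvp' huq'
  rw [← hpq'] at h2
  omega

lemma egc_sorted_split {R : ℕ → ℕ → Prop} {l : List ℕ} (hl : l.Pairwise R) {u v : ℕ}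
    (hu : u ∈ l) (hv : v ∈ l) (huv : ¬ R v u) (hne : v ≠ u) :
    ∃ p q, l = (p ++ [u]) ++ q ∧ v ∈ q := by
  obtain ⟨p, q, rfl⟩ := List.append_of_mem hu
  refine ⟨p, q, by simp, ?_⟩
  rcases List.mem_append.1 hv with h | h
  · exact absurd ((List.pairwise_append.1 hl).2.2 v h u (by simp)) huv
  · rcases List.mem_cons.1 h with h | h
    · exact absurd h hne
    · exact h

lemma egc_sublist_pair {u : List ℕ} {x y : ℕ} (h : u.Sublist [x, y]) :
    u = [] ∨ u = [x] ∨ u = [y] ∨ u = [x, y] := by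
  have h2 : u ∈ ([x, y]).sublists := List.mem_sublists.2 h
  simp [List.sublists] at h2
  tauto

lemma egc_LCS_eq_aux {x y : List ℕ} {m : ℕ}
    (hw : ∃ s : List ℕ, s.Sublist x ∧ s.Sublist y ∧ s.length = m)
    (hub : ∀ s : List ℕ, s.Sublist x → s.Sublist y → s.length ≤ m) :
    sSup {k | ∃ s : List ℕ, s.Sublist x ∧ s.Sublist y ∧ s.length = k} = m := by
  have hne : {k | ∃ s : List ℕ, s.Sublist x ∧ s.Sublist y ∧ s.length = k}.Nonempty :=
    ⟨0, [], List.nil_sublist x, List.nil_sublist y, rfl⟩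
  apply le_antisymm
  · apply csSup_le hne
    rintro k ⟨s, hsx, hsy, rfl⟩
    exact hub s hsx hsy
  · refine le_csSup ⟨m, ?_⟩ hw
    rintro k ⟨s, hsx, hsy, rfl⟩
    exact hub s hsx hsy

lemma egc_rest_eq (n i j : ℕ) (hi : 1 ≤ i) (hij : i < j) (hj : j ≤ n) :
    (List.range' 1 n).filter (fun z => !(z == i || z == j)) =
      List.range' 1 (i-1) ++ (List.range' (i+1) (j-i-1) ++ List.range' (j+1) (n-j)) := by
  have hA : List.range' (i+1) (j-i-1) ++ List.range' (i+1+1*(j-i-1)) (n-j+1) 1 =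
      List.range' (i+1) ((n-j+1)+(j-i-1)) := by rw [List.range'_append, Nat.add_comm (j-i-1)]
  rw [show i+1+1*(j-i-1) = j from by omega] at hA
  have hj1 : List.range' j (n-j+1) 1 = j :: List.range' (j+1) (n-j) := by
    rw [List.range'_succ]
  have hi1 : List.range' i ((n-j+1)+(j-i-1)+1) 1 = i :: List.range' (i+1) ((n-j+1)+(j-i-1)) := by
    rw [List.range'_succ]
  have hB : List.range' 1 (i-1) ++ List.range' (1+1*(i-1)) ((n-j+1)+(j-i-1)+1) 1 =
      List.range' 1 (((n-j+1)+(j-i-1)+1)+(i-1)) := by rw [List.range'_append, Nat.add_comm (i-1)]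
  rw [show 1+1*(i-1) = i from by omega, show (((n-j+1)+(j-i-1)+1)+(i-1)) = n from by omega] at hB
  have h1 : List.range' 1 n = List.range' 1 (i-1) ++
      (i :: (List.range' (i+1) (j-i-1) ++ (j :: List.range' (j+1) (n-j)))) := by
    rw [← hB, hi1, ← hA, hj1]
  rw [h1]
  rw [List.filter_append, List.filter_cons, List.filter_append, List.filter_cons]
  simp only [beq_self_eq_true, Bool.true_or, Bool.or_true, Bool.not_true, if_neg, Bool.false_eq_true,
    not_false_eq_true, if_false]
  congr 1
  · apply List.filter_eq_self.mpr
    intro z hz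
    simp only [List.mem_range'_1] at hz
    simp only [Bool.not_eq_true', Bool.or_eq_false_iff, beq_eq_false_iff_ne, ne_eq]
    omega
  congr 1
  · apply List.filter_eq_self.mpr
    intro z hz
    simp only [List.mem_range'_1] at hz
    simp only [Bool.not_eq_true', Bool.or_eq_false_iff, beq_eq_false_iff_ne, ne_eq]
    omega
  · apply List.filter_eq_self.mpr
    intro z hz
    simp only [List.mem_range'_1] at hz
    simp only [Bool.not_eq_true', Bool.or_eq_false_iff, beq_eq_false_iff_ne, ne_eq]
    omega

lemma egc_ub1 (n i j : ℕ) (hi : 1 ≤ i) (hij : i < j) (hj : j ≤ n)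
    (X1 X2 rest : List ℕ)
    (hX1 : X1 = List.range' (n + 1) (n + 1)) (hX2 : X2 = List.range' (2 * n + 2) (n + 1))
    (hrest : rest = (List.range' 1 n).filter fun z => !(z == i || z == j))
    (a b : List ℕ) (ha : a.Pairwise (· < ·)) (hb : b.Pairwise (· > ·))
    (hand : a.Nodup) (hbnd : b.Nodup)
    (hA : ∀ z ∈ a, 1 ≤ z ∧ z ≤ n) (hB : ∀ z ∈ b, 1 ≤ z ∧ z ≤ n)
    (hdisj : ∀ z, z ∈ a → z ∉ b)
    (s : List ℕ) (hnd : s.Nodup)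
    (hs1 : s.Sublist ([j, i] ++ X1 ++ X2 ++ rest))
    (hs2 : s.Sublist (a ++ X1 ++ b ++ X2)) :
    s.length ≤ 2*n + 2 + (if i ∈ a ∨ j ∈ a then 1 else 0) := by
  have hX1m : ∀ z ∈ X1, n+1 ≤ z ∧ z ≤ 2*n+1 := by
    subst hX1; intro z hz; simp only [List.mem_range'_1] at hz; omega
  have hX2m : ∀ z ∈ X2, 2*n+2 ≤ z := by
    subst hX2; intro z hz; simp only [List.mem_range'_1] at hz; omega
  have hRm : ∀ z ∈ rest, z ≤ n ∧ z ≠ i ∧ z ≠ j := by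
    subst hrest; intro z hz
    simp only [List.mem_filter, List.mem_range'_1, Bool.not_eq_true', Bool.or_eq_false_iff,
      beq_eq_false_iff_ne, ne_eq] at hz
    exact ⟨by omega, hz.2.1, hz.2.2⟩
  have hrestlen : rest.length = n - 2 := by
    rw [hrest, egc_rest_eq n i j hi hij hj]
    simp only [List.length_append, List.length_range']
    omega
  have hs1' : s.Sublist ([j, i] ++ (X1 ++ (X2 ++ rest))) := by
    simpa only [List.append_assoc] using hs1
  obtain ⟨u, t, rfl, hu, ht⟩ := List.sublist_append_iff.1 hs1'
  obtain ⟨v, t2, rfl, hv, ht2⟩ := List.sublist_append_iff.1 ht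
  obtain ⟨w, r, rfl, hw, hr⟩ := List.sublist_append_iff.1 ht2
  have hum : ∀ z ∈ u, z = j ∨ z = i := fun z hz => by simpa using hu.subset hz
  have hvm : ∀ z ∈ v, n+1 ≤ z ∧ z ≤ 2*n+1 := fun z hz => hX1m z (hv.subset hz)
  have hwm : ∀ z ∈ w, 2*n+2 ≤ z := fun z hz => hX2m z (hw.subset hz)
  have hrm : ∀ z ∈ r, z ≤ n ∧ z ≠ i ∧ z ≠ j := fun z hz => hRm z (hr.subset hz)
  have hul : u.length ≤ 2 := by simpa using hu.length_le
  have hvl : v.length ≤ n+1 := by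
    have := hv.length_le; rwa [hX1, List.length_range'] at this
  have hwl : w.length ≤ n+1 := by
    have := hw.length_le; rwa [hX2, List.length_range'] at this
  have hrl : r.length ≤ n - 2 := by
    have := hr.length_le; omega
  -- reassociated sublist facts for the pi side
  have hy1 : (u ++ (v ++ (w ++ r))).Sublist ((a ++ X1) ++ (b ++ X2)) := by
    simpa only [List.append_assoc] using hs2
  have hy2 : (u ++ (v ++ (w ++ r))).Sublist (a ++ (X1 ++ (b ++ X2))) := by
    simpa only [List.append_assoc] using hs2
  have hy3 : (u ++ (v ++ (w ++ r))).Sublist ((a ++ X1 ++ b) ++ X2) := hs2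
  -- conflict: rest vs X2
  have K1 : r = [] ∨ w = [] := by
    by_contra hcon
    push_neg at hcon
    obtain ⟨hrne, hwne⟩ := hcon
    obtain ⟨r0, hr0⟩ := List.exists_mem_of_ne_nil r hrne
    obtain ⟨w0, hw0⟩ := List.exists_mem_of_ne_nil w hwne
    have hr0m := hrm r0 hr0
    have hw0m := hwm w0 hw0
    have hxsp : (u ++ (v ++ (w ++ r))).Sublist ((u ++ (v ++ w)) ++ r) := by
      simp only [List.append_assoc]; exact List.Sublist.refl _
    refine egc_no_cross hnd hxsp hy3 (u := w0) (v := r0) ?_ ?_ ?_ ?_ ?_ ?_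
    · simp only [List.mem_append]; tauto
    · simp only [List.mem_append]; tauto
    · intro h; have := hrm w0 h; omega
    · intro h
      rcases List.mem_append.1 h with h | h
      · rcases hum _ h with h | h <;> omega
      · rcases List.mem_append.1 h with h | h
        · have := hvm _ h; omega
        · have := hwm _ h; omega
    · intro h
      rcases List.mem_append.1 h with h | h
      · rcases List.mem_append.1 h with h | h
        · have := hA _ h; omega
        · have := hX1m _ h; omega
      · have := hB _ h; omega
    · intro h; have := hX2m _ h; omega
  -- conflict: z in {i,j} not in a, vs X1
  have K2 : ∀ z, (z = i ∨ z = j) → z ∉ a → z ∈ u ++ (v ++ (w ++ r)) → v = [] := by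
    intro z hzij hza hzs
    by_contra hvne
    obtain ⟨v0, hv0⟩ := List.exists_mem_of_ne_nil v hvne
    have hv0m := hvm v0 hv0
    refine egc_no_cross hnd (List.Sublist.refl _) hy1 (u := z) (v := v0) hzs ?_ ?_ ?_ ?_ ?_
    · simp only [List.mem_append]; tauto
    · intro h
      rcases List.mem_append.1 h with h | h
      · have := hvm _ h; omega
      · rcases List.mem_append.1 h with h | h
        · have := hwm _ h; omega
        · have := hrm _ h; omega
    · intro h; rcases hum _ h with h | h <;> omega
    · intro h
      rcases List.mem_append.1 h with h | h
      · exact hza h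
      · have := hX1m _ h; omega
    · intro h
      rcases List.mem_append.1 h with h | h
      · have := hB _ h; omega
      · have := hX2m _ h; omega
  -- conflict: i in a, both i and j in s
  have K4 : i ∈ a → j ∈ u ++ (v ++ (w ++ r)) → i ∈ u ++ (v ++ (w ++ r)) → False := by
    intro hia hjs his
    have hiu : i ∈ u := by
      rcases List.mem_append.1 his with h | h
      · exact h
      · exfalso
        rcases List.mem_append.1 h with h | h
        · have := hvm _ h; omega
        · rcases List.mem_append.1 h with h | h
          · have := hwm _ h; omega
          · have := hrm _ h; omega
    have hju : j ∈ u := by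
      rcases List.mem_append.1 hjs with h | h
      · exact h
      · exfalso
        rcases List.mem_append.1 h with h | h
        · have := hvm _ h; omega
        · rcases List.mem_append.1 h with h | h
          · have := hwm _ h; omega
          · have := hrm _ h; omega
    have hueq : u = [j, i] := by
      rcases egc_sublist_pair hu with h | h | h | h <;> subst h <;> simp_all
    have hxji : (u ++ (v ++ (w ++ r))).Sublist ([j] ++ ([i] ++ (v ++ (w ++ r)))) := by
      rw [hueq]; exact List.Sublist.refl _
    have hjnx2 : j ∉ [i] ++ (v ++ (w ++ r)) := by
      intro h
      rcases List.mem_append.1 h with h | h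
      · simp at h; omega
      · rcases List.mem_append.1 h with h | h
        · have := hvm _ h; omega
        · rcases List.mem_append.1 h with h | h
          · have := hwm _ h; omega
          · have := hrm _ h; omega
    have hinx1 : i ∉ [j] := by simp; omega
    by_cases hja : j ∈ a
    · obtain ⟨p, q, haeq, hjq⟩ := egc_sorted_split ha hia hja (by omega) (by omega)
      have hy' : (u ++ (v ++ (w ++ r))).Sublist ((p ++ [i]) ++ (q ++ (X1 ++ (b ++ X2)))) := by
        have h2 := hs2
        rw [haeq] at h2
        simpa only [List.append_assoc] using h2
      have hnd' : ((p ++ [i]) ++ q).Nodup := haeq ▸ hand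
      have hjny1 : j ∉ p ++ [i] := fun h => (List.disjoint_of_nodup_append hnd') h hjq
      have hiny2 : i ∉ q ++ (X1 ++ (b ++ X2)) := by
        intro h
        rcases List.mem_append.1 h with h | h
        · exact (List.disjoint_of_nodup_append hnd') (by simp) h
        · rcases List.mem_append.1 h with h | h
          · have := hX1m _ h; omega
          · rcases List.mem_append.1 h with h | h
            · exact hdisj i hia h
            · have := hX2m _ h; omega
      exact egc_no_cross hnd hxji hy' hjs his hjnx2 hinx1 hjny1 hiny2
    · have hiny2 : i ∉ X1 ++ (b ++ X2) := by
        intro h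
        rcases List.mem_append.1 h with h | h
        · have := hX1m _ h; omega
        · rcases List.mem_append.1 h with h | h
          · exact hdisj i hia h
          · have := hX2m _ h; omega
      exact egc_no_cross hnd hxji hy2 hjs his hjnx2 hinx1 hja hiny2
  -- counting
  simp only [List.length_append]
  by_cases hc : i ∈ a ∨ j ∈ a
  · rw [if_pos hc]
    rcases K1 with h | h
    · subst h
      by_cases hia : i ∈ a
      · have hu1 : u.length ≤ 1 := by
          rcases egc_sublist_pair hu with h | h | h | h <;> subst h <;> simp
          exact K4 hia (by simp) (by simp)
        simp only [List.length_nil]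
        omega
      · have hja : j ∈ a := hc.resolve_left hia
        by_cases his : i ∈ u ++ (v ++ (w ++ []))
        · have hveq := K2 i (Or.inl rfl) hia his
          subst hveq
          simp only [List.length_nil]
          omega
        · have hu1 : u.length ≤ 1 := by
            rcases egc_sublist_pair hu with h | h | h | h <;> subst h <;> simp
            exact absurd (by simp : i ∈ [j, i] ++ (v ++ (w ++ []))) his

          simp only [List.length_nil]
          omega
    · subst h
      simp only [List.length_nil]
      omega
  · rw [if_neg hc]
    push_neg at hc
    obtain ⟨hia, hja⟩ := hc
    rcases K1 with h | h
    · subst h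
      by_cases hune : u = []
      · subst hune
        simp only [List.length_nil]
        omega
      · obtain ⟨z0, hz0⟩ := List.exists_mem_of_ne_nil u hune
        have hz0s : z0 ∈ u ++ (v ++ (w ++ [])) := List.mem_append.2 (Or.inl hz0)
        have hveq : v = [] := by
          rcases hum z0 hz0 with h | h
          · exact K2 z0 (Or.inr h) (h ▸ hja) hz0s
          · exact K2 z0 (Or.inl h) (h ▸ hia) hz0s
        subst hveq
        simp only [List.length_nil]
        omega
    · subst h
      simp only [List.length_nil]
      omega

lemma egc_ub2 (n i j : ℕ) (hi : 1 ≤ i) (hij : i < j) (hj : j ≤ n)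
    (X1 X2 rest : List ℕ)
    (hX1 : X1 = List.range' (n + 1) (n + 1)) (hX2 : X2 = List.range' (2 * n + 2) (n + 1))
    (hrest : rest = (List.range' 1 n).filter fun z => !(z == i || z == j))
    (a b : List ℕ) (ha : a.Pairwise (· < ·)) (hb : b.Pairwise (· > ·))
    (hand : a.Nodup) (hbnd : b.Nodup)
    (hA : ∀ z ∈ a, 1 ≤ z ∧ z ≤ n) (hB : ∀ z ∈ b, 1 ≤ z ∧ z ≤ n)
    (hdisj : ∀ z, z ∈ a → z ∉ b)
    (hcov : ∀ z, 1 ≤ z → z ≤ n → z ∈ a ∨ z ∈ b)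
    (s : List ℕ) (hnd : s.Nodup)
    (hs1 : s.Sublist (X1 ++ [i, j] ++ X2 ++ rest))
    (hs2 : s.Sublist (a ++ X1 ++ b ++ X2)) :
    s.length ≤ 2*n + 2 + (if i ∉ a ∨ j ∉ a then 1 else 0) := by
  have hX1m : ∀ z ∈ X1, n+1 ≤ z ∧ z ≤ 2*n+1 := by
    subst hX1; intro z hz; simp only [List.mem_range'_1] at hz; omega
  have hX2m : ∀ z ∈ X2, 2*n+2 ≤ z := by
    subst hX2; intro z hz; simp only [List.mem_range'_1] at hz; omega
  have hRm : ∀ z ∈ rest, z ≤ n ∧ z ≠ i ∧ z ≠ j := by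
    subst hrest; intro z hz
    simp only [List.mem_filter, List.mem_range'_1, Bool.not_eq_true', Bool.or_eq_false_iff,
      beq_eq_false_iff_ne, ne_eq] at hz
    exact ⟨by omega, hz.2.1, hz.2.2⟩
  have hrestlen : rest.length = n - 2 := by
    rw [hrest, egc_rest_eq n i j hi hij hj]
    simp only [List.length_append, List.length_range']
    omega
  have hs1' : s.Sublist (X1 ++ ([i, j] ++ (X2 ++ rest))) := by
    simpa only [List.append_assoc] using hs1
  obtain ⟨v, t, rfl, hv, ht⟩ := List.sublist_append_iff.1 hs1'
  obtain ⟨u, t2, rfl, hu, ht2⟩ := List.sublist_append_iff.1 ht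
  obtain ⟨w, r, rfl, hw, hr⟩ := List.sublist_append_iff.1 ht2
  have hum : ∀ z ∈ u, z = i ∨ z = j := fun z hz => by simpa using hu.subset hz
  have hvm : ∀ z ∈ v, n+1 ≤ z ∧ z ≤ 2*n+1 := fun z hz => hX1m z (hv.subset hz)
  have hwm : ∀ z ∈ w, 2*n+2 ≤ z := fun z hz => hX2m z (hw.subset hz)
  have hrm : ∀ z ∈ r, z ≤ n ∧ z ≠ i ∧ z ≠ j := fun z hz => hRm z (hr.subset hz)
  have hul : u.length ≤ 2 := by simpa using hu.length_le
  have hvl : v.length ≤ n+1 := by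
    have := hv.length_le; rwa [hX1, List.length_range'] at this
  have hwl : w.length ≤ n+1 := by
    have := hw.length_le; rwa [hX2, List.length_range'] at this
  have hrl : r.length ≤ n - 2 := by
    have := hr.length_le; omega
  have hy1 : (v ++ (u ++ (w ++ r))).Sublist ((a ++ X1) ++ (b ++ X2)) := by
    simpa only [List.append_assoc] using hs2
  have hy2 : (v ++ (u ++ (w ++ r))).Sublist (a ++ (X1 ++ (b ++ X2))) := by
    simpa only [List.append_assoc] using hs2
  have hy3 : (v ++ (u ++ (w ++ r))).Sublist ((a ++ X1 ++ b) ++ X2) := hs2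
  have K1 : r = [] ∨ w = [] := by
    by_contra hcon
    push_neg at hcon
    obtain ⟨hrne, hwne⟩ := hcon
    obtain ⟨r0, hr0⟩ := List.exists_mem_of_ne_nil r hrne
    obtain ⟨w0, hw0⟩ := List.exists_mem_of_ne_nil w hwne
    have hr0m := hrm r0 hr0
    have hw0m := hwm w0 hw0
    have hxsp : (v ++ (u ++ (w ++ r))).Sublist ((v ++ (u ++ w)) ++ r) := by
      simp only [List.append_assoc]; exact List.Sublist.refl _
    refine egc_no_cross hnd hxsp hy3 (u := w0) (v := r0) ?_ ?_ ?_ ?_ ?_ ?_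
    · simp only [List.mem_append]; tauto
    · simp only [List.mem_append]; tauto
    · intro h; have := hrm w0 h; omega
    · intro h
      rcases List.mem_append.1 h with h | h
      · have := hvm _ h; omega
      · rcases List.mem_append.1 h with h | h
        · rcases hum _ h with h | h <;> omega
        · have := hwm _ h; omega
    · intro h
      rcases List.mem_append.1 h with h | h
      · rcases List.mem_append.1 h with h | h
        · have := hA _ h; omega
        · have := hX1m _ h; omega
      · have := hB _ h; omega
    · intro h; have := hX2m _ h; omega
  have K2 : ∀ z, (z = i ∨ z = j) → z ∈ a → z ∈ v ++ (u ++ (w ++ r)) → v = [] := by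
    intro z hzij hza hzs
    by_contra hvne
    obtain ⟨v0, hv0⟩ := List.exists_mem_of_ne_nil v hvne
    have hv0m := hvm v0 hv0
    have hv0s : v0 ∈ v ++ (u ++ (w ++ r)) := List.mem_append.2 (Or.inl hv0)
    refine egc_no_cross hnd (List.Sublist.refl _) hy2 (u := v0) (v := z) hv0s hzs ?_ ?_ ?_ ?_
    · intro h
      rcases List.mem_append.1 h with h | h
      · rcases hum _ h with h | h <;> omega
      · rcases List.mem_append.1 h with h | h
        · have := hwm _ h; omega
        · have := hrm _ h; omega
    · intro h; have := hvm _ h; omega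
    · intro h; have := hA _ h; omega
    · intro h
      rcases List.mem_append.1 h with h | h
      · have := hX1m _ h; omega
      · rcases List.mem_append.1 h with h | h
        · exact hdisj z hza h
        · have := hX2m _ h; omega
  have K4 : i ∉ a → i ∈ v ++ (u ++ (w ++ r)) → j ∈ v ++ (u ++ (w ++ r)) → False := by
    intro hia his hjs
    have hiu : i ∈ u := by
      rcases List.mem_append.1 his with h | h
      · exfalso; have := hvm _ h; omega
      · rcases List.mem_append.1 h with h | h
        · exact h
        · exfalso
          rcases List.mem_append.1 h with h | h
          · have := hwm _ h; omega
          · have := hrm _ h; omega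
    have hju : j ∈ u := by
      rcases List.mem_append.1 hjs with h | h
      · exfalso; have := hvm _ h; omega
      · rcases List.mem_append.1 h with h | h
        · exact h
        · exfalso
          rcases List.mem_append.1 h with h | h
          · have := hwm _ h; omega
          · have := hrm _ h; omega
    have hueq : u = [i, j] := by
      rcases egc_sublist_pair hu with h | h | h | h <;> subst h <;> simp_all
    have hxij : (v ++ (u ++ (w ++ r))).Sublist ((v ++ [i]) ++ ([j] ++ (w ++ r))) := by
      rw [hueq]; simp only [List.append_assoc]; exact List.Sublist.refl _
    have hinx2 : i ∉ [j] ++ (w ++ r) := by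
      intro h
      rcases List.mem_append.1 h with h | h
      · simp at h; omega
      · rcases List.mem_append.1 h with h | h
        · have := hwm _ h; omega
        · have := hrm _ h; omega
    have hjnx1 : j ∉ v ++ [i] := by
      intro h
      rcases List.mem_append.1 h with h | h
      · have := hvm _ h; omega
      · simp at h; omega
    by_cases hja : j ∈ a
    · have hiny1 : i ∉ a ++ X1 := by
        intro h
        rcases List.mem_append.1 h with h | h
        · exact hia h
        · have := hX1m _ h; omega
      have hjny2 : j ∉ b ++ X2 := by
        intro h
        rcases List.mem_append.1 h with h | h
        · exact hdisj j hja h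
        · have := hX2m _ h; omega
      exact egc_no_cross hnd hxij hy1 his hjs hinx2 hjnx1 hiny1 hjny2
    · have hib : i ∈ b := (hcov i hi (by omega)).resolve_left hia
      have hjb : j ∈ b := (hcov j (by omega) hj).resolve_left hja
      obtain ⟨p, q, hbeq, hiq⟩ := egc_sorted_split hb hjb hib (by omega) (by omega)
      have hy' : (v ++ (u ++ (w ++ r))).Sublist ((a ++ (X1 ++ (p ++ [j]))) ++ (q ++ X2)) := by
        have h2 := hs2
        rw [hbeq] at h2
        simpa only [List.append_assoc] using h2
      have hnd' : ((p ++ [j]) ++ q).Nodup := hbeq ▸ hbnd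
      have hiny1 : i ∉ a ++ (X1 ++ (p ++ [j])) := by
        intro h
        rcases List.mem_append.1 h with h | h
        · exact hia h
        · rcases List.mem_append.1 h with h | h
          · have := hX1m _ h; omega
          · exact (List.disjoint_of_nodup_append hnd') h hiq
      have hjny2 : j ∉ q ++ X2 := by
        intro h
        rcases List.mem_append.1 h with h | h
        · exact (List.disjoint_of_nodup_append hnd') (by simp) h
        · have := hX2m _ h; omega
      exact egc_no_cross hnd hxij hy' his hjs hinx2 hjnx1 hiny1 hjny2
  simp only [List.length_append]
  by_cases hc : i ∉ a ∨ j ∉ a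
  · rw [if_pos hc]
    rcases K1 with h | h
    · subst h
      by_cases hia : i ∈ a
      · by_cases his : i ∈ v ++ (u ++ (w ++ []))
        · have hveq := K2 i (Or.inl rfl) hia his
          subst hveq
          simp only [List.length_nil]
          omega
        · have hu1 : u.length ≤ 1 := by
            rcases egc_sublist_pair hu with h | h | h | h <;> subst h <;> simp
            exact absurd (by simp : i ∈ v ++ ([i, j] ++ (w ++ []))) his
          simp only [List.length_nil]
          omega
      · have hu1 : u.length ≤ 1 := by
          rcases egc_sublist_pair hu with h | h | h | h <;> subst h <;> simp
          exact K4 hia (by simp) (by simp)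
        simp only [List.length_nil]
        omega
    · subst h
      simp only [List.length_nil]
      omega
  · rw [if_neg hc]
    push_neg at hc
    obtain ⟨hia, hja⟩ := hc
    rcases K1 with h | h
    · subst h
      by_cases hune : u = []
      · subst hune
        simp only [List.length_nil]
        omega
      · obtain ⟨z0, hz0⟩ := List.exists_mem_of_ne_nil u hune
        have hz0s : z0 ∈ v ++ (u ++ (w ++ [])) := List.mem_append.2 (Or.inr (List.mem_append.2 (Or.inl hz0)))
        have hveq : v = [] := by
          rcases hum z0 hz0 with h | h
          · exact K2 z0 (Or.inl h) (h ▸ hia) hz0s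
          · exact K2 z0 (Or.inr h) (h ▸ hja) hz0s
        subst hveq
        simp only [List.length_nil]
        omega
    · subst h
      simp only [List.length_nil]
      omega

lemma egc_LCS_eq {x y : List ℕ} {m : ℕ}
    (hw : ∃ s : List ℕ, s.Sublist x ∧ s.Sublist y ∧ s.length = m)
    (hub : ∀ s : List ℕ, s.Sublist x → s.Sublist y → s.length ≤ m) :
    LCS x y = m := by
  unfold LCS; exact egc_LCS_eq_aux hw hub

theorem edge_gadget_cost (n i j : ℕ) (hi : 1 ≤ i) (hij : i < j) (hj : j ≤ n)
    (X1 X2 rest pie1 pie2 : List ℕ)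
    (hX1 : X1 = List.range' (n + 1) (n + 1)) (hX2 : X2 = List.range' (2 * n + 2) (n + 1))
    (hrest : rest = (List.range' 1 n).filter fun z => !(z == i || z == j))
    (h1 : pie1 = [j, i] ++ X1 ++ X2 ++ rest)
    (h2 : pie2 = X1 ++ [i, j] ++ X2 ++ rest)
    (a b : List ℕ) (ha : a.Pairwise (· < ·)) (hb : b.Pairwise (· > ·))
    (hab : (a ++ b).Perm (List.range' 1 n))
    (π : List ℕ) (hπ : π = a ++ X1 ++ b ++ X2) :
    (((i ∈ a ∧ j ∉ a) ∨ (i ∉ a ∧ j ∈ a)) →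
        ulamDist pie1 π + ulamDist pie2 π = 2 * n - 2) ∧
    (¬((i ∈ a ∧ j ∉ a) ∨ (i ∉ a ∧ j ∈ a)) →
        ulamDist pie1 π + ulamDist pie2 π = 2 * n - 1) := by
  have habnd : (a ++ b).Nodup := (hab.nodup_iff).2 (List.nodup_range' (s := 1) (n := n))
  have hand : a.Nodup := (List.nodup_append'.1 habnd).1
  have hbnd : b.Nodup := (List.nodup_append'.1 habnd).2.1
  have hdisj : ∀ z, z ∈ a → z ∉ b := fun z hz hz' => (List.nodup_append'.1 habnd).2.2 hz hz'
  have hA : ∀ z ∈ a, 1 ≤ z ∧ z ≤ n := by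
    intro z hz
    have h := hab.subset (List.mem_append.2 (Or.inl hz))
    rw [List.mem_range'_1] at h
    omega
  have hB : ∀ z ∈ b, 1 ≤ z ∧ z ≤ n := by
    intro z hz
    have h := hab.subset (List.mem_append.2 (Or.inr hz))
    rw [List.mem_range'_1] at h
    omega
  have hcov : ∀ z, 1 ≤ z → z ≤ n → z ∈ a ∨ z ∈ b := by
    intro z h1z h2z
    have h : z ∈ a ++ b := hab.symm.subset (List.mem_range'_1.2 ⟨h1z, by omega⟩)
    exact List.mem_append.1 h
  have hX1nd : X1.Nodup := by rw [hX1]; exact List.nodup_range'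
  have hX2nd : X2.Nodup := by rw [hX2]; exact List.nodup_range'
  have hπnd : π.Nodup := by
    rw [hπ]
    refine List.nodup_append'.2 ⟨List.nodup_append'.2 ⟨List.nodup_append'.2 ⟨hand, hX1nd, ?_⟩,
      hbnd, ?_⟩, hX2nd, ?_⟩
    · intro z hz hz'
      have := hA z hz
      rw [hX1, List.mem_range'_1] at hz'
      omega
    · intro z hz hz'
      rcases List.mem_append.1 hz with h | h
      · exact hdisj z h hz'
      · have := hB z hz'
        rw [hX1, List.mem_range'_1] at h
        omega
    · intro z hz hz'
      rw [hX2, List.mem_range'_1] at hz'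
      rcases List.mem_append.1 hz with h | h
      · rcases List.mem_append.1 h with h | h
        · have := hA z h; omega
        · rw [hX1, List.mem_range'_1] at h; omega
      · have := hB z h; omega
  have hrestlen : rest.length = n - 2 := by
    rw [hrest, egc_rest_eq n i j hi hij hj]
    simp only [List.length_append, List.length_range']
    omega
  have hlen1 : pie1.length = 3 * n + 2 := by
    rw [h1]
    simp only [List.length_append, hX1, hX2, List.length_range', hrestlen, List.length_cons,
      List.length_nil]
    omega
  have hlen2 : pie2.length = 3 * n + 2 := by
    rw [h2]
    simp only [List.length_append, hX1, hX2, List.length_range', hrestlen, List.length_cons,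
      List.length_nil]
    omega
  have hlenwit : (X1 ++ X2).length = 2 * n + 2 := by
    simp only [List.length_append, hX1, hX2, List.length_range']
    omega
  have wpi : (X1 ++ X2).Sublist π := by
    rw [hπ]
    refine List.Sublist.append ?_ (List.Sublist.refl X2)
    exact (List.sublist_append_right a X1).trans (List.sublist_append_left _ b)
  have L1a : ∀ z, (z = i ∨ z = j) → z ∈ a → LCS pie1 π = 2 * n + 3 := by
    intro z hz hza
    apply egc_LCS_eq
    · refine ⟨[z] ++ X1 ++ X2, ?_, ?_, ?_⟩
      · rw [h1]
        refine List.Sublist.trans ?_ (List.sublist_append_left _ rest)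
        refine List.Sublist.append (List.Sublist.append ?_ (List.Sublist.refl X1))
          (List.Sublist.refl X2)
        refine List.singleton_sublist.2 ?_
        rcases hz with rfl | rfl <;> simp
      · rw [hπ]
        refine List.Sublist.append ?_ (List.Sublist.refl X2)
        refine List.Sublist.trans ?_ (List.sublist_append_left _ b)
        exact List.Sublist.append (List.singleton_sublist.2 hza) (List.Sublist.refl X1)
      · simp only [List.length_append, hX1, hX2, List.length_range', List.length_cons,
          List.length_nil]
        omega
    · intro s hsx hsy
      have hnd : s.Nodup := List.Nodup.sublist hsy hπnd
      have hub := egc_ub1 n i j hi hij hj X1 X2 rest hX1 hX2 hrest a b ha hb hand hbnd hA hB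
        hdisj s hnd (by rwa [h1] at hsx) (by rwa [hπ] at hsy)
      rw [if_pos (by rcases hz with rfl | rfl; exacts [Or.inl hza, Or.inr hza])] at hub
      omega
  have L1b : i ∉ a → j ∉ a → LCS pie1 π = 2 * n + 2 := by
    intro hia hja
    apply egc_LCS_eq
    · refine ⟨X1 ++ X2, ?_, wpi, hlenwit⟩
      rw [h1]
      refine List.Sublist.trans ?_ (List.sublist_append_left _ rest)
      exact List.Sublist.append (List.sublist_append_right [j, i] X1) (List.Sublist.refl X2)
    · intro s hsx hsy
      have hnd : s.Nodup := List.Nodup.sublist hsy hπnd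
      have hub := egc_ub1 n i j hi hij hj X1 X2 rest hX1 hX2 hrest a b ha hb hand hbnd hA hB
        hdisj s hnd (by rwa [h1] at hsx) (by rwa [hπ] at hsy)
      rw [if_neg (by rintro (h | h); exacts [hia h, hja h])] at hub
      omega
  have L2a : ∀ z, (z = i ∨ z = j) → z ∉ a → LCS pie2 π = 2 * n + 3 := by
    intro z hz hza
    have hzb : z ∈ b := by
      rcases hz with rfl | rfl
      · exact (hcov z hi (by omega)).resolve_left hza
      · exact (hcov z (by omega) hj).resolve_left hza
    apply egc_LCS_eq
    · refine ⟨X1 ++ [z] ++ X2, ?_, ?_, ?_⟩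
      · rw [h2]
        refine List.Sublist.trans ?_ (List.sublist_append_left _ rest)
        refine List.Sublist.append (List.Sublist.append (List.Sublist.refl X1) ?_)
          (List.Sublist.refl X2)
        refine List.singleton_sublist.2 ?_
        rcases hz with rfl | rfl <;> simp
      · rw [hπ]
        refine List.Sublist.append ?_ (List.Sublist.refl X2)
        exact List.Sublist.append (List.sublist_append_right a X1)
          (List.singleton_sublist.2 hzb)
      · simp only [List.length_append, hX1, hX2, List.length_range', List.length_cons,
          List.length_nil]
        omega
    · intro s hsx hsy
      have hnd : s.Nodup := List.Nodup.sublist hsy hπnd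
      have hub := egc_ub2 n i j hi hij hj X1 X2 rest hX1 hX2 hrest a b ha hb hand hbnd hA hB
        hdisj hcov s hnd (by rwa [h2] at hsx) (by rwa [hπ] at hsy)
      rw [if_pos (by rcases hz with rfl | rfl; exacts [Or.inl hza, Or.inr hza])] at hub
      omega
  have L2b : i ∈ a → j ∈ a → LCS pie2 π = 2 * n + 2 := by
    intro hia hja
    apply egc_LCS_eq
    · refine ⟨X1 ++ X2, ?_, wpi, hlenwit⟩
      rw [h2]
      refine List.Sublist.trans ?_ (List.sublist_append_left _ rest)
      exact List.Sublist.append (List.sublist_append_left X1 [i, j]) (List.Sublist.refl X2)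
    · intro s hsx hsy
      have hnd : s.Nodup := List.Nodup.sublist hsy hπnd
      have hub := egc_ub2 n i j hi hij hj X1 X2 rest hX1 hX2 hrest a b ha hb hand hbnd hA hB
        hdisj hcov s hnd (by rwa [h2] at hsx) (by rwa [hπ] at hsy)
      rw [if_neg (by push_neg; exact ⟨hia, hja⟩)] at hub
      omega
  constructor
  · rintro (⟨hia, hja⟩ | ⟨hia, hja⟩)
    · have e1 := L1a i (Or.inl rfl) hia
      have e2 := L2a j (Or.inr rfl) hja
      unfold ulamDist
      rw [e1, e2, hlen1, hlen2]
      omega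
    · have e1 := L1a j (Or.inr rfl) hja
      have e2 := L2a i (Or.inl rfl) hia
      unfold ulamDist
      rw [e1, e2, hlen1, hlen2]
      omega
  · intro hc
    by_cases hia : i ∈ a
    · have hja : j ∈ a := by
        by_contra h
        exact hc (Or.inl ⟨hia, h⟩)
      have e1 := L1a i (Or.inl rfl) hia
      have e2 := L2b hia hja
      unfold ulamDist
      rw [e1, e2, hlen1, hlen2]
      omega
    · have hja : j ∉ a := fun h => hc (Or.inr ⟨hia, h⟩)
      have e1 := L1b hia hja
      have e2 := L2a i (Or.inl rfl) hia
      unfold ulamDist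
      rw [e1, e2, hlen1, hlen2]
      omega
end

section
/- Define η : S_L → S_{2L} by interleaving: for π ∈ S_L, η(π) := π[1] ∘ (L+1) ∘ π[2] ∘ (L+2) ∘ ⋯ ∘ π[L] ∘ (2L). Then for every π, π' ∈ S_L, d_U(η(π), η(π')) = d_H(π, π'), where d_H is the Hamming distance (number of positions at which the strings differ). -/
/-- Hamming distance between two equal-length strings. -/
def hamDist (x y : List ℕ) : ℕ := ((x.zip y).filter fun p => p.1 != p.2).length

/-- Interleave `π ∈ S_L` with the string `(L+1)(L+2)⋯(2L)`. -/
def eta (L : ℕ) (π : List ℕ) : List ℕ :=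
  ((π.zip (List.range' (L + 1) L)).map fun p => [p.1, p.2]).flatten

/- ## Auxiliary definitions -/

def ilv (p r : List ℕ) : List ℕ := ((p.zip r).map fun q => [q.1, q.2]).flatten

def mtch (p p' : List ℕ) : ℕ := ((p.zip p').filter fun q => q.1 == q.2).length

lemma ilv_nil (r : List ℕ) : ilv [] r = [] := rfl

lemma ilv_nil' (p : List ℕ) : ilv p [] = [] := by cases p <;> rfl

lemma ilv_cons (a m : ℕ) (p r : List ℕ) : ilv (a::p) (m::r) = [a, m] ++ ilv p r := rfl

lemma mem_ilv {x : ℕ} : ∀ {p r : List ℕ}, x ∈ ilv p r → x ∈ p ∨ x ∈ r := by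
  intro p
  induction p with
  | nil => intro r h; simp [ilv_nil] at h
  | cons a p ih =>
    intro r h
    cases r with
    | nil => rw [ilv_nil'] at h; simp at h
    | cons m r =>
      rw [ilv_cons] at h
      simp only [List.mem_append, List.mem_cons, List.not_mem_nil, or_false] at h ⊢
      rcases h with (h|h)|h
      · exact Or.inl (Or.inl h)
      · exact Or.inr (Or.inl h)
      · rcases ih h with h|h
        · exact Or.inl (Or.inr h)
        · exact Or.inr (Or.inr h)

lemma mtch_cons (a a' : ℕ) (p p' : List ℕ) :
    mtch (a::p) (a'::p') = (if a = a' then 1 else 0) + mtch p p' := by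
  by_cases h : a = a' <;> simp [mtch, List.filter_cons, h, Nat.add_comm]

lemma ilv_length : ∀ (r p : List ℕ), p.length = r.length → (ilv p r).length = 2 * r.length := by
  intro r
  induction r with
  | nil => intro p hp; rw [ilv_nil']; simp
  | cons m r ih =>
    intro p hp
    cases p with
    | nil => simp at hp
    | cons a p =>
      simp only [List.length_cons, Nat.succ.injEq] at hp
      rw [ilv_cons, List.length_append, ih p hp]
      simp; ring

/- ## Upper bound -/

lemma head_bound {a a' m : ℕ} {X : List ℕ} {s1 u t2 : List ℕ}
    (haa : a ≠ a') (ha' : a' ≠ m) (hmX : m ∉ X)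
    (hs1 : s1.Sublist [a, m]) (ht1 : (s1 ++ u).Sublist [a', m])
    (hs2 : (u ++ t2).Sublist X) :
    (s1 ++ u).length ≤ 1 := by
  by_contra h
  push_neg at h
  have h2 : (s1 ++ u).length = 2 := by
    have h3 := ht1.length_le
    simp only [List.length_append, List.length_cons, List.length_nil] at h3 h ⊢
    omega
  have heq : s1 ++ u = [a', m] := ht1.eq_of_length (by simpa using h2)
  cases s1 with
  | nil =>
    simp at heq
    subst heq
    exact hmX (hs2.subset (by simp))
  | cons b s1t =>
    have hb : b = a' := by
      rw [List.cons_append] at heq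
      exact (List.cons.injEq _ _ _ _ ▸ heq).1
    have : b ∈ [a, m] := hs1.subset (by simp)
    simp at this
    rcases this with h1 | h1
    · exact haa (h1.symm.trans hb)
    · exact ha' (hb.symm.trans h1)

lemma key : ∀ (r p p' s : List ℕ),
    p.length = r.length → p'.length = r.length →
    (∀ m ∈ r, m ∉ p) → (∀ m ∈ r, m ∉ p') → r.Nodup →
    s.Sublist (ilv p r) → s.Sublist (ilv p' r) →
    s.length ≤ r.length + mtch p p' := by
  intro r
  induction r with
  | nil =>
    intro p p' s hl hl' _ _ _ hs hs'
    rw [ilv_nil'] at hs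
    rw [List.sublist_nil] at hs
    simp [hs]
  | cons m r ih =>
    intro p p' s hl hl' hd hd' hnd hs hs'
    cases p with
    | nil => simp at hl
    | cons a p =>
    cases p' with
    | nil => simp at hl'
    | cons a' p' =>
    simp only [List.length_cons, Nat.succ.injEq] at hl hl'
    rw [ilv_cons] at hs hs'
    have hm_np : m ∉ a::p := hd m (by simp)
    have hm_np' : m ∉ a'::p' := hd' m (by simp)
    have hm_nr : m ∉ r := (List.nodup_cons.mp hnd).1
    have hnd2 : r.Nodup := (List.nodup_cons.mp hnd).2
    have hdr : ∀ x ∈ r, x ∉ p := fun x hx hxp =>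
      hd x (List.mem_cons_of_mem _ hx) (List.mem_cons_of_mem _ hxp)
    have hdr' : ∀ x ∈ r, x ∉ p' := fun x hx hxp =>
      hd' x (List.mem_cons_of_mem _ hx) (List.mem_cons_of_mem _ hxp)
    have hmX : m ∉ ilv p r := fun h => by
      rcases mem_ilv h with h | h
      · exact hm_np (List.mem_cons_of_mem _ h)
      · exact hm_nr h
    have hmY : m ∉ ilv p' r := fun h => by
      rcases mem_ilv h with h | h
      · exact hm_np' (List.mem_cons_of_mem _ h)
      · exact hm_nr h
    have ham : a ≠ m := fun h => hm_np (by simp [h])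
    have ha'm : a' ≠ m := fun h => hm_np' (by simp [h])
    obtain ⟨s1, s2, hseq, hs1, hs2⟩ := List.sublist_append_iff.mp hs
    obtain ⟨t1, t2, hteq, ht1, ht2⟩ := List.sublist_append_iff.mp hs'
    have heq : s1 ++ s2 = t1 ++ t2 := hseq ▸ hteq
    have hIH : ∀ u : List ℕ, u.Sublist (ilv p r) → u.Sublist (ilv p' r) →
        u.length ≤ r.length + mtch p p' := fun u h1 h2 => ih p p' u hl hl' hdr hdr' hnd2 h1 h2
    rw [mtch_cons]
    rcases List.append_eq_append_iff.mp heq with ⟨u, hu1, hu2⟩ | ⟨u, hu1, hu2⟩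
    · -- t1 = s1 ++ u, s2 = u ++ t2
      have ht2X : t2.Sublist (ilv p r) := ((List.sublist_append_right u t2).trans (hu2 ▸ hs2))
      have hb2 : t2.length ≤ r.length + mtch p p' := hIH t2 ht2X ht2
      have hb1 : t1.length ≤ if a = a' then 2 else 1 := by
        by_cases haa : a = a'
        · simpa [haa] using ht1.length_le
        · simp only [haa, if_false]
          rw [hu1]
          exact head_bound haa ha'm hmX hs1 (hu1 ▸ ht1) (hu2 ▸ hs2)
      have : s.length = t1.length + t2.length := by rw [hteq, List.length_append]
      by_cases haa : a = a' <;> simp [haa] at hb1 ⊢ <;> omega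
    · -- s1 = t1 ++ u, t2 = u ++ s2
      have hs2Y : s2.Sublist (ilv p' r) := ((List.sublist_append_right u s2).trans (hu2 ▸ ht2))
      have hb2 : s2.length ≤ r.length + mtch p p' := hIH s2 hs2 hs2Y
      have hb1 : s1.length ≤ if a = a' then 2 else 1 := by
        by_cases haa : a = a'
        · simpa [haa] using hs1.length_le
        · simp only [haa, if_false]
          rw [hu1]
          exact head_bound (Ne.symm haa) ham hmY ht1 (hu1 ▸ hs1) (hu2 ▸ ht2)
      have : s.length = s1.length + s2.length := by rw [hseq, List.length_append]
      by_cases haa : a = a' <;> simp [haa] at hb1 ⊢ <;> omega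

/- ## Lower bound: witness -/

def wit : List ℕ → List ℕ → List ℕ → List ℕ
  | a::p, a'::p', m::r => (if a = a' then [a, m] else [m]) ++ wit p p' r
  | _, _, _ => []

lemma wit_spec : ∀ (r p p' : List ℕ), p.length = r.length → p'.length = r.length →
    (wit p p' r).Sublist (ilv p r) ∧ (wit p p' r).Sublist (ilv p' r) ∧
    (wit p p' r).length = r.length + mtch p p' := by
  intro r
  induction r with
  | nil =>
    intro p p' hl hl'
    simp only [List.length_nil, List.length_eq_zero_iff] at hl hl'
    subst hl; subst hl'
    simp [wit, ilv_nil, mtch]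
  | cons m r ih =>
    intro p p' hl hl'
    cases p with
    | nil => simp at hl
    | cons a p =>
    cases p' with
    | nil => simp at hl'
    | cons a' p' =>
    simp only [List.length_cons, Nat.succ.injEq] at hl hl'
    obtain ⟨ih1, ih2, ih3⟩ := ih p p' hl hl'
    have hblk : (if a = a' then [a, m] else [m]).Sublist [a, m] ∧
        (if a = a' then [a, m] else [m]).Sublist [a', m] := by
      by_cases h : a = a' <;> simp [h]
    constructor
    · rw [ilv_cons]
      show ((if a = a' then [a, m] else [m]) ++ wit p p' r).Sublist _
      exact hblk.1.append ih1
    constructor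
    · rw [ilv_cons]
      show ((if a = a' then [a, m] else [m]) ++ wit p p' r).Sublist _
      exact hblk.2.append ih2
    · show ((if a = a' then [a, m] else [m]) ++ wit p p' r).length = _
      rw [List.length_append, ih3, mtch_cons]
      by_cases h : a = a' <;> simp [h] <;> omega

/- ## Main theorem -/

theorem interleaving_embedding (L : ℕ) (π π' : List ℕ)
    (hπ : IsPermOf L π) (hπ' : IsPermOf L π') :
    ulamDist (eta L π) (eta L π') = hamDist π π' := by
  have hlen : π.length = L := by
    have := hπ.length_eq
    simpa using this
  have hlen' : π'.length = L := by
    have := hπ'.length_eq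
    simpa using this
  set r : List ℕ := List.range' (L + 1) L with hr
  have hrlen : r.length = L := by simp [hr]
  have hdisj : ∀ m ∈ r, m ∉ π := by
    intro m hm hmem
    have h1 : L + 1 ≤ m := by
      rw [hr, List.mem_range'_1] at hm
      exact hm.1
    have h2 : m < 1 + L := (List.mem_range'_1.mp (hπ.subset hmem)).2
    omega
  have hdisj' : ∀ m ∈ r, m ∉ π' := by
    intro m hm hmem
    have h1 : L + 1 ≤ m := by
      rw [hr, List.mem_range'_1] at hm
      exact hm.1
    have h2 : m < 1 + L := (List.mem_range'_1.mp (hπ'.subset hmem)).2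
    omega
  have hnd : r.Nodup := by rw [hr]; exact List.nodup_range'
  have heta : eta L π = ilv π r := rfl
  have heta' : eta L π' = ilv π' r := rfl
  have hplen : π.length = r.length := by rw [hlen, hrlen]
  have hplen' : π'.length = r.length := by rw [hlen', hrlen]
  -- LCS value
  have hub : ∀ k ∈ {k | ∃ s : List ℕ, s.Sublist (eta L π) ∧ s.Sublist (eta L π') ∧ s.length = k},
      k ≤ L + mtch π π' := by
    rintro k ⟨s, h1, h2, rfl⟩
    rw [heta] at h1; rw [heta'] at h2
    have := key r π π' s hplen hplen' hdisj hdisj' hnd h1 h2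
    rwa [hrlen] at this
  obtain ⟨hw1, hw2, hw3⟩ := wit_spec r π π' hplen hplen'
  have hmem : L + mtch π π' ∈ {k | ∃ s : List ℕ, s.Sublist (eta L π) ∧ s.Sublist (eta L π') ∧ s.length = k} := by
    exact ⟨wit π π' r, heta ▸ hw1, heta' ▸ hw2, by rw [hw3, hrlen]⟩
  have hLCS : LCS (eta L π) (eta L π') = L + mtch π π' := by
    apply le_antisymm
    · exact csSup_le ⟨_, hmem⟩ hub
    · exact le_csSup ⟨L + mtch π π', hub⟩ hmem
  have hetalen : (eta L π).length = 2 * L := by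
    rw [heta, ilv_length r π hplen, hrlen]
  -- hamDist
  have hziplen : (π.zip π').length = L := by
    rw [List.length_zip, hlen, hlen']; simp
  have hsum : (π.zip π').length =
      ((π.zip π').filter fun q => q.1 == q.2).length +
      ((π.zip π').filter fun q => !(q.1 == q.2)).length :=
    List.length_eq_length_filter_add _
  have hham : hamDist π π' = L - mtch π π' := by
    have : hamDist π π' = ((π.zip π').filter fun q => !(q.1 == q.2)).length := by
      simp [hamDist, bne]
    rw [this]
    rw [hziplen] at hsum
    unfold mtch
    omega
  have hmle : mtch π π' ≤ L := by
    rw [hziplen] at hsum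
    unfold mtch
    omega
  rw [ulamDist, hLCS, hetalen, hham]
  omega
end

section
/- Given strings a₁, …, a_n ∈ {0,1,2}^L, there exist permutations π₁, …, π_n ∈ S_{3L} such that d_H(a_i, a_j) = d_U(π_i, π_j) for all i, j ∈ [n]. Concretely, π_i is obtained from a_i by replacing the k-th character c by a block of three fresh symbols arranged as σ_c shifted appropriately, where σ₀ = 123, σ₁ = 231, σ₂ = 312, using the same three symbols for position k across all strings. -/
def sig : ℕ → List ℕ
  | 0 => [1,2,3]
  | 1 => [2,3,1]
  | _ => [3,1,2]

lemma sig_cases (c : ℕ) : sig c = [1,2,3] ∨ sig c = [2,3,1] ∨ sig c = [3,1,2] := by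
  rcases c with _|_|c <;> simp [sig]

lemma sig_perm (c : ℕ) : (sig c).Perm [1,2,3] := by
  rcases sig_cases c with h|h|h <;> rw [h] <;> decide

def blk (k c : ℕ) : List ℕ := (sig c).map (· + 3*k)

def enc (L : ℕ) (f : ℕ → ℕ) : List ℕ := (List.range L).flatMap fun k => blk k (f k)

lemma blk_perm (k c : ℕ) : (blk k c).Perm (List.range' (1+3*k) 3) := by
  have h1 : List.range' (1+3*k) 3 = List.map (· + 3*k) [1,2,3] := by
    simp [List.range']; omega
  rw [h1, blk]
  exact (sig_perm c).map _

lemma enc_perm (L : ℕ) (f : ℕ → ℕ) : (enc L f).Perm (List.range' 1 (3*L)) := by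
  induction L with
  | zero => simp [enc]
  | succ L ih =>
    have h1 : enc (L+1) f = enc L f ++ blk L (f L) := by
      simp [enc, List.range_succ]
    have h2 : List.range' 1 (3*(L+1)) = List.range' 1 (3*L) ++ List.range' (1+3*L) 3 := by
      have := List.range'_append (s := 1) (m := 3*L) (n := 3) (step := 1)
      simp only [one_mul] at this
      rw [show 3*(L+1) = 3*L + 3 from by omega, ← this]
    rw [h1, h2]
    exact ih.append (blk_perm L (f L))

lemma mem_blk_class {v k c : ℕ} (h : v ∈ blk k c) : 3*k+1 ≤ v ∧ v ≤ 3*k+3 := by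
  rw [blk, List.mem_map] at h
  obtain ⟨u, hu, rfl⟩ := h
  have : u ∈ [1,2,3] := (sig_perm c).mem_iff.mp hu
  simp at this
  omega

lemma filter_blk (m c k : ℕ) :
    (blk m c).filter (fun v => decide ((v-1)/3 = k)) = if m = k then blk m c else [] := by
  split
  · next h =>
    apply List.filter_eq_self.mpr
    intro v hv
    have := mem_blk_class hv
    simp; omega
  · next h =>
    apply List.filter_eq_nil_iff.mpr
    intro v hv
    have := mem_blk_class hv
    simp; omega

lemma filter_enc (L : ℕ) (f : ℕ → ℕ) (k : ℕ) :
    (enc L f).filter (fun v => decide ((v-1)/3 = k)) = if k < L then blk k (f k) else [] := by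
  induction L with
  | zero => simp [enc]
  | succ L ih =>
    have h1 : enc (L+1) f = enc L f ++ blk L (f L) := by
      simp [enc, List.range_succ]
    rw [h1, List.filter_append, ih, filter_blk]
    rcases lt_trichotomy k L with h|rfl|h
    · simp [h, Nat.lt_succ_of_lt h, Nat.ne_of_gt h]
    · simp
    · simp [Nat.lt_asymm h, Nat.not_lt.mpr h, Nat.not_lt.mpr (Nat.succ_le_of_lt h), Nat.ne_of_lt h]

lemma length_eq_sum_filter (L : ℕ) (s : List ℕ) (hs : ∀ v ∈ s, (v-1)/3 < L) :
    s.length = ∑ k ∈ Finset.range L, (s.filter (fun v => decide ((v-1)/3 = k))).length := by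
  induction s with
  | nil => simp
  | cons h t ih =>
    have hh : (h-1)/3 ∈ Finset.range L := Finset.mem_range.mpr (hs h (by simp))
    have ih' := ih (fun v hv => hs v (by simp [hv]))
    simp only [List.filter_cons]
    rw [List.length_cons, ih']
    have : ∀ k ∈ Finset.range L,
        (if ((h-1)/3 = k : Bool) then h :: t.filter (fun v => decide ((v-1)/3 = k))
          else t.filter (fun v => decide ((v-1)/3 = k))).length
        = (if (h-1)/3 = k then 1 else 0) + (t.filter (fun v => decide ((v-1)/3 = k))).length := by
      intro k _
      by_cases hk : (h-1)/3 = k <;> simp [hk, Nat.add_comm]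
    rw [Finset.sum_congr rfl this, Finset.sum_add_distrib, Finset.sum_ite_eq (Finset.range L)]
    simp [hh, Nat.add_comm]

lemma sig_inj : ∀ c < 3, ∀ c' < 3, sig c = sig c' → c = c' := by decide

lemma blk_len (k c : ℕ) : (blk k c).length = 3 := by
  rw [blk, List.length_map, (sig_perm c).length_eq]; rfl

lemma upper (L : ℕ) (f g : ℕ → ℕ) (hf : ∀ k, f k < 3) (hg : ∀ k, g k < 3)
    (s : List ℕ) (hsx : s.Sublist (enc L f)) (hsy : s.Sublist (enc L g)) :
    s.length ≤ ∑ k ∈ Finset.range L, (if f k = g k then 3 else 2) := by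
  have hcls : ∀ v ∈ s, (v-1)/3 < L := by
    intro v hv
    have hv' : v ∈ enc L f := hsx.mem hv
    rw [enc, List.mem_flatMap] at hv'
    obtain ⟨k, hk, hvk⟩ := hv'
    have := mem_blk_class hvk
    rw [List.mem_range] at hk
    omega
  rw [length_eq_sum_filter L s hcls]
  apply Finset.sum_le_sum
  intro k hk
  rw [Finset.mem_range] at hk
  set p : ℕ → Bool := fun v => decide ((v-1)/3 = k) with hp
  have hf1 : (s.filter p).Sublist (blk k (f k)) := by
    have := hsx.filter p
    rwa [filter_enc, if_pos hk] at this
  have hg1 : (s.filter p).Sublist (blk k (g k)) := by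
    have := hsy.filter p
    rwa [filter_enc, if_pos hk] at this
  have hle3 : (s.filter p).length ≤ 3 := by
    have := hf1.length_le; rwa [blk_len] at this
  by_cases hfg : f k = g k
  · simp [hfg]; omega
  · rw [if_neg hfg]
    by_contra hc
    have h3 : (s.filter p).length = 3 := by omega
    have e1 : s.filter p = blk k (f k) := hf1.eq_of_length (by rw [h3, blk_len])
    have e2 : s.filter p = blk k (g k) := hg1.eq_of_length (by rw [h3, blk_len])
    have : sig (f k) = sig (g k) := by
      have hb : blk k (f k) = blk k (g k) := e1 ▸ e2
      rw [blk, blk] at hb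
      exact List.map_injective_iff.mpr (fun x y => by omega) hb
    exact hfg (sig_inj _ (hf k) _ (hg k) this)

def cp : ℕ → ℕ → List ℕ
  | 0,0 => [1,2,3]
  | 0,1 => [2,3]
  | 0,_ => [1,2]
  | 1,0 => [2,3]
  | 1,1 => [2,3,1]
  | 1,_ => [3,1]
  | _,0 => [1,2]
  | _,1 => [3,1]
  | _,_ => [3,1,2]

lemma cp_sublist_left : ∀ c < 3, ∀ c' < 3, (cp c c').Sublist (sig c) := by decide
lemma cp_sublist_right : ∀ c < 3, ∀ c' < 3, (cp c c').Sublist (sig c') := by decide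
lemma cp_length : ∀ c < 3, ∀ c' < 3, (cp c c').length = if c = c' then 3 else 2 := by decide

lemma flatMap_sublist {α : Type*} (l : List α) (F G : α → List ℕ)
    (h : ∀ x ∈ l, (F x).Sublist (G x)) : (l.flatMap F).Sublist (l.flatMap G) := by
  induction l with
  | nil => simp
  | cons a t ih =>
    simp only [List.flatMap_cons]
    exact (h a (by simp)).append (ih (fun x hx => h x (by simp [hx])))

lemma lower (L : ℕ) (f g : ℕ → ℕ) (hf : ∀ k, f k < 3) (hg : ∀ k, g k < 3) :
    ∃ s : List ℕ, s.Sublist (enc L f) ∧ s.Sublist (enc L g) ∧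
      s.length = ∑ k ∈ Finset.range L, (if f k = g k then 3 else 2) := by
  refine ⟨(List.range L).flatMap fun k => (cp (f k) (g k)).map (· + 3*k), ?_, ?_, ?_⟩
  · exact flatMap_sublist _ _ _ fun k _ =>
      (cp_sublist_left _ (hf k) _ (hg k)).map _
  · exact flatMap_sublist _ _ _ fun k _ =>
      (cp_sublist_right _ (hf k) _ (hg k)).map _
  · rw [List.length_flatMap]
    induction L with
    | zero => simp
    | succ L ih =>
      rw [List.range_succ, Finset.sum_range_succ, List.map_append, List.sum_append, ih]
      simp [cp_length _ (hf L) _ (hg L)]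


lemma LCS_enc (L : ℕ) (f g : ℕ → ℕ) (hf : ∀ k, f k < 3) (hg : ∀ k, g k < 3) :
    LCS (enc L f) (enc L g) = ∑ k ∈ Finset.range L, (if f k = g k then 3 else 2) := by
  obtain ⟨s, h1, h2, h3⟩ := lower L f g hf hg
  have hub : ∀ m ∈ {k | ∃ s : List ℕ, s.Sublist (enc L f) ∧ s.Sublist (enc L g) ∧ s.length = k},
      m ≤ ∑ k ∈ Finset.range L, (if f k = g k then 3 else 2) := by
    rintro m ⟨t, ht1, ht2, rfl⟩
    exact upper L f g hf hg t ht1 ht2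
  apply le_antisymm
  · exact csSup_le ⟨s.length, s, h1, h2, rfl⟩ hub
  · rw [← h3]; exact le_csSup ⟨_, hub⟩ ⟨s, h1, h2, rfl⟩

lemma enc_length (L : ℕ) (f : ℕ → ℕ) : (enc L f).length = 3*L := by
  rw [(enc_perm L f).length_eq, List.length_range']

theorem embed_hamming_small_alphabet (n L : ℕ) (a : Fin n → Fin L → Fin 3) :
    ∃ π : Fin n → List ℕ, (∀ i, IsPermOf (3 * L) (π i)) ∧
      ∀ i j, (Finset.univ.filter fun k => a i k ≠ a j k).card = ulamDist (π i) (π j) := by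
  set F : Fin n → ℕ → ℕ := fun i k => if h : k < L then (a i ⟨k, h⟩ : ℕ) else 0 with hF
  have hF3 : ∀ i k, F i k < 3 := by
    intro i k
    simp only [hF]
    split
    · exact (a i _).isLt
    · omega
  refine ⟨fun i => enc L (F i), fun i => enc_perm L (F i), fun i j => ?_⟩
  rw [ulamDist, enc_length, LCS_enc L (F i) (F j) (hF3 i) (hF3 j)]
  have key : (∑ k ∈ Finset.range L, (if F i k = F j k then 3 else 2)) +
      (Finset.univ.filter fun k => a i k ≠ a j k).card = 3*L := by
    have hcard : (Finset.univ.filter fun k => a i k ≠ a j k).card =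
        ∑ k ∈ Finset.range L, (if F i k = F j k then 0 else 1) := by
      rw [Finset.card_filter,
        ← Fin.sum_univ_eq_sum_range (fun m => if F i m = F j m then 0 else 1) L]
      refine Finset.sum_congr rfl fun k _ => ?_
      have hev : ∀ l, F l (k : ℕ) = (a l k : ℕ) := by
        intro l; simp only [hF, dif_pos k.isLt, Fin.eta]
      simp only [hev]
      by_cases h : a i k = a j k
      · simp [h]
      · rw [if_neg (fun he => h (Fin.val_injective he))]; simp [h]
    rw [hcard, ← Finset.sum_add_distrib]
    have : ∀ k ∈ Finset.range L,
        ((if F i k = F j k then 3 else 2) + if F i k = F j k then 0 else 1) = 3 := by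
      intro k _; split <;> rfl
    rw [Finset.sum_congr rfl this, Finset.sum_const, Finset.card_range]
    ring
  omega
end

section
/- Let Σ₁, …, Σ_n ⊆ Σ be alphabets of a common size s. Then there exists an alphabet Φ disjoint from Σ with |Φ| = O(n log n), and strings b₁, …, b_n such that each b_i is a permutation of Σ_i ⊔ Φ (a string of length s + |Φ| in which each symbol of Σ_i ⊔ Φ appears exactly once), and for all distinct i, j, the Hamming distance between b_i and b_j is maximal: d_H(b_i, b_j) = s + |Φ|. -/
lemma hamDist_ofFn {m : ℕ} (f g : Fin m → ℕ) (h : ∀ p, f p ≠ g p) :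
    hamDist (List.ofFn f) (List.ofFn g) = m := by
  unfold hamDist
  have hz : ((List.ofFn f).zip (List.ofFn g)).length = m := by
    simp [List.length_zip]
  rw [List.filter_eq_self.mpr, hz]
  intro a ha
  obtain ⟨i, hi, rfl⟩ := List.mem_iff_getElem.mp ha
  simp only [List.getElem_zip, List.getElem_ofFn, bne_iff_ne, ne_eq]
  exact h _

lemma exists_matrix (m : ℕ) (A : ℕ → Finset ℕ) :
    ∀ t, 2 * t ≤ m → (∀ i < t, (A i).card = m) →
      ∃ M : ℕ → Fin m → ℕ, ∀ i < t, Function.Injective (M i) ∧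
        (∀ x, x ∈ A i ↔ ∃ p, M i p = x) ∧ ∀ j < i, ∀ p, M i p ≠ M j p := by
  intro t
  induction t with
  | zero => intro _ _; exact ⟨fun _ _ => 0, fun i hi => absurd hi (by omega)⟩
  | succ t ih =>
    intro hm hA
    obtain ⟨M, hM⟩ := ih (by omega) (fun i hi => hA i (by omega))
    -- Hall setup for column t
    classical
    set r : {x // x ∈ A t} → Finset (Fin m) :=
      fun x => Finset.univ.filter (fun p => ∀ j < t, M j p ≠ (x : ℕ)) with hr
    have hcardr : ∀ x, m - t ≤ (r x).card := by
      intro x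
      have hsub : Finset.univ.filter (fun p => ¬ (∀ j < t, M j p ≠ (x : ℕ))) ⊆
          (Finset.range t).biUnion (fun j => Finset.univ.filter (fun p => M j p = (x : ℕ))) := by
        intro p hp
        simp only [Finset.mem_filter, not_forall] at hp
        obtain ⟨j, hj, hpe⟩ := hp.2
        simp only [Finset.mem_biUnion, Finset.mem_range, Finset.mem_filter, Finset.mem_univ]
        exact ⟨j, hj, trivial, by simpa using hpe⟩
      have hb : ((Finset.range t).biUnion
          (fun j => Finset.univ.filter (fun p => M j p = (x : ℕ)))).card ≤ t := by
        calc _ ≤ ∑ j ∈ Finset.range t, (Finset.univ.filter (fun p => M j p = (x : ℕ))).card :=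
              Finset.card_biUnion_le
          _ ≤ ∑ j ∈ Finset.range t, 1 := by
              apply Finset.sum_le_sum
              intro j hj
              apply Finset.card_le_one.mpr
              intro a ha b hb
              simp only [Finset.mem_filter] at ha hb
              exact (hM j (by simp at hj; omega)).1 (ha.2.trans hb.2.symm)
          _ = t := by simp
      have hcompl : (r x).card + (Finset.univ.filter
          (fun p => ¬ (∀ j < t, M j p ≠ (x : ℕ)))).card = m := by
        rw [hr]
        rw [Finset.card_filter_add_card_filter_not]
        simp
      have := Finset.card_le_card hsub
      omega
    have hall : ∀ S : Finset {x // x ∈ A t}, S.card ≤ (S.biUnion r).card := by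
      intro S
      rcases S.eq_empty_or_nonempty with rfl | ⟨x0, hx0⟩
      · simp
      by_cases hS : S.card ≤ m - t
      · calc S.card ≤ (r x0).card := le_trans hS (hcardr x0)
          _ ≤ _ := Finset.card_le_card (Finset.subset_biUnion_of_mem r hx0)
      · -- S.card > m - t ≥ t, show biUnion = univ
        have hSt : t < S.card := by omega
        have huniv : S.biUnion r = Finset.univ := by
          apply Finset.eq_univ_of_forall
          intro p
          by_contra hp
          simp only [Finset.mem_biUnion, not_exists, not_and] at hp
          -- every x in S is hit by some M j p, j < t
          have hmap : ∀ x ∈ S, ∃ j, j < t ∧ M j p = (x : ℕ) := by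
            intro x hx
            have := hp x hx
            simp only [r, Finset.mem_filter, Finset.mem_univ, true_and, not_forall,
              not_not] at this
            obtain ⟨j, hj, he⟩ := this
            exact ⟨j, hj, by simpa using he⟩
          set phi : {x // x ∈ A t} → ℕ := fun x =>
            if h : ∃ j, j < t ∧ M j p = (x : ℕ) then Nat.find h else 0 with hphi
          have : S.card ≤ (Finset.range t).card := by
            apply Finset.card_le_card_of_injOn phi
            · intro x hx
              have h := hmap x hx
              have hspec := Nat.find_spec h
              simp only [hphi, dif_pos h, Finset.mem_range]
              exact Finset.mem_coe.mpr (Finset.mem_range.mpr hspec.1)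
            · intro x hx y hy hxy
              have h1 := hmap x hx
              have h2 := hmap y hy
              have s1 := Nat.find_spec h1
              have s2 := Nat.find_spec h2
              simp only [hphi, dif_pos h1, dif_pos h2] at hxy
              apply Subtype.ext
              rw [← s1.2, ← s2.2, hxy]
          simp only [Finset.card_range] at this; omega
        rw [huniv]
        have : S.card ≤ (A t).card := by
          classical
          calc S.card ≤ (Finset.univ : Finset {x // x ∈ A t}).card := Finset.card_le_card (Finset.subset_univ S)
            _ = (A t).card := by simp
        simp only [Finset.card_univ, Fintype.card_fin]
        have := hA t (by omega)
        omega
    obtain ⟨f, hfinj, hfr⟩ := (Finset.all_card_le_biUnion_card_iff_exists_injective r).mp hall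
    have hcard : Fintype.card {x // x ∈ A t} = Fintype.card (Fin m) := by
      simp [hA t (by omega)]
    have hfbij : Function.Bijective f :=
      (Fintype.bijective_iff_injective_and_card f).mpr ⟨hfinj, hcard⟩
    set e := Equiv.ofBijective f hfbij with he
    set g : Fin m → ℕ := fun p => ((e.symm p : {x // x ∈ A t}) : ℕ) with hg
    have hginj : Function.Injective g := by
      intro p q hpq
      exact e.symm.injective (Subtype.ext hpq)
    have hgmem : ∀ x, x ∈ A t ↔ ∃ p, g p = x := by
      intro x
      constructor
      · intro hx
        exact ⟨e ⟨x, hx⟩, by simp [hg]⟩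
      · rintro ⟨p, rfl⟩
        exact (e.symm p).2
    have hgav : ∀ j < t, ∀ p, g p ≠ M j p := by
      intro j hj p
      have : f (e.symm p) ∈ r (e.symm p) := hfr _
      have hfe : f (e.symm p) = p := e.apply_symm_apply p
      rw [hfe, hr] at this
      simp only [Finset.mem_filter] at this
      exact (this.2 j hj).symm
    refine ⟨fun i => if i = t then g else M i, ?_⟩
    intro i hi
    by_cases hit : i = t
    · subst hit
      refine ⟨by simpa using hginj, by simpa using hgmem, ?_⟩
      intro j hj p
      have hjt : ¬ (j = i) := by omega
      simp only [if_pos rfl, if_neg hjt, if_true]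
      exact hgav j hj p
    · have hi' : i < t := by omega
      obtain ⟨h1, h2, h3⟩ := hM i hi'
      refine ⟨by simpa [hit] using h1, by simpa [hit] using h2, ?_⟩
      intro j hj p
      have hjt : ¬ (j = t) := by omega
      simpa [hit, hjt] using h3 j hj p

theorem maximal_hamming_codes :
    ∃ C : ℕ, ∀ (n s : ℕ) (Sig : Finset ℕ) (Sigs : Fin n → Finset ℕ),
      (∀ i, Sigs i ⊆ Sig) → (∀ i, (Sigs i).card = s) →
      ∃ (Phi : Finset ℕ) (b : Fin n → List ℕ),
        Disjoint Phi Sig ∧ Phi.card ≤ C * n * (Nat.log 2 n + 1) ∧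
        (∀ i, (b i).Nodup ∧ (b i).toFinset = Sigs i ∪ Phi) ∧
        (∀ i j, i ≠ j → hamDist (b i) (b j) = s + Phi.card) := by
  classical
  use 2
  intro n s Sig Sigs hsub hcards
  set N := Sig.sup id + 1 with hN
  set Phi := (Finset.range (2 * n)).image (· + N) with hPhi
  have hPhicard : Phi.card = 2 * n := by
    rw [hPhi, Finset.card_image_of_injective _ (add_left_injective N), Finset.card_range]
  have hdisj : Disjoint Phi Sig := by
    rw [Finset.disjoint_left]
    intro x hx hxS
    simp only [hPhi, Finset.mem_image, Finset.mem_range] at hx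
    obtain ⟨t, _, rfl⟩ := hx
    have := Finset.le_sup (f := id) hxS
    simp only [id] at this
    omega
  set m := s + 2 * n with hm
  set A : ℕ → Finset ℕ := fun i => if h : i < n then Sigs ⟨i, h⟩ ∪ Phi else ∅ with hA
  have hAcard : ∀ i < n, (A i).card = m := by
    intro i hi
    have hd : Disjoint (Sigs ⟨i, hi⟩) Phi := (hdisj.mono_right (hsub ⟨i, hi⟩)).symm
    rw [hA]
    simp only [dif_pos hi]
    rw [Finset.card_union_of_disjoint hd, hcards, hPhicard]
  obtain ⟨M, hM⟩ := exists_matrix m A n (by omega) hAcard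
  refine ⟨Phi, fun i => List.ofFn (M i.val), hdisj, ?_, ?_, ?_⟩
  · rw [hPhicard]
    calc 2 * n = 2 * n * 1 := by ring
      _ ≤ 2 * n * (Nat.log 2 n + 1) := by
          apply Nat.mul_le_mul_left
          omega
  · intro i
    obtain ⟨hinj, hmem, _⟩ := hM i.val i.isLt
    constructor
    · exact List.nodup_ofFn.mpr hinj
    · ext x
      rw [List.mem_toFinset]
      have : x ∈ List.ofFn (M i.val) ↔ ∃ p, M i.val p = x := by
        simp [List.mem_ofFn]
      rw [this, ← hmem, hA]
      simp only [dif_pos i.isLt, Fin.eta]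
  · intro i j hij
    rw [hPhicard]
    have hd : ∀ p, M i.val p ≠ M j.val p := by
      rcases Nat.lt_or_ge j.val i.val with h | h
      · exact (hM i.val i.isLt).2.2 j.val h
      · have hlt : i.val < j.val := by
          rcases Nat.lt_or_ge i.val j.val with h' | h'
          · exact h'
          · exact absurd (Fin.ext (by omega)) hij
        intro p
        exact ((hM j.val j.isLt).2.2 i.val hlt p).symm
    exact hamDist_ofFn _ _ hd
end

section
/- Let a₁, …, a_n be strings of length L over an alphabet Σ such that each symbol appears at most once in each a_i. Then there exist permutations π₁, …, π_n of a common alphabet of size O(|Σ| + n log n) and an integer K ≥ 0 such that for all distinct i, j ∈ [n], d_H(a_i, a_j) = d_U(π_i, π_j) − K. -/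
namespace EHN

/-- sorted list of the alphabet -/
def sl (Sig : Finset ℕ) : List ℕ := Sig.sort (· ≤ ·)

variable (n L : ℕ) (Sig : Finset ℕ)

/-- number of tail slots -/
def T : ℕ := Sig.card + n + 1

/-- number of slots: real slots 1..L, tail slots L+1..L+T -/
def Sl : ℕ := L + T n Sig

/-- number of positions -/
def P : ℕ := 2 * Sl n L Sig + 1

/-- separator symbols (odd numbers) -/
def SEP (r : ℕ) : ℕ := 2 * r + 1

/-- content of slot r for string x with index i -/
def slotSym (i : ℕ) (x : List ℕ) (r : ℕ) : Option ℕ :=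
  if r = 0 then none
  else if r ≤ L then some (2 * (sl Sig).idxOf (x.getD (r - 1) 0))
  else
    let ρ := (r - (L + 1) + T n Sig - i) % T n Sig
    if ρ < Sig.card ∧ (sl Sig).getD ρ 0 ∉ x then some (2 * ρ) else none

/-- symbol at position p: even positions hold separators, odd position 2r-1 holds slot r -/
def symAt (i : ℕ) (x : List ℕ) (p : ℕ) : Option ℕ :=
  if p % 2 = 0 then some (SEP (p / 2)) else slotSym n L Sig i x ((p + 1) / 2)

/-- the permutation associated to string x (with string index i) -/
def pik (i : ℕ) (x : List ℕ) : List ℕ :=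
  (List.range (P n L Sig)).filterMap (symAt n L Sig i x)

/-- slot of an (even) element -/
def eslot (i : ℕ) (x : List ℕ) (e : ℕ) : ℕ :=
  if (sl Sig).getD (e / 2) 0 ∈ x then x.idxOf ((sl Sig).getD (e / 2) 0) + 1
  else (L + 1) + ((e / 2 + i) % T n Sig)

/-- position key of an element -/
def pk (i : ℕ) (x : List ℕ) (e : ℕ) : ℕ :=
  if e % 2 = 1 then 2 * (e - 1) else 4 * eslot n L Sig i x e - 2

/-- the common alphabet -/
def Gam : Finset ℕ :=
  (Finset.range (Sl n L Sig + 1)).image SEP ∪ (Finset.range Sig.card).image (fun ρ => 2 * ρ)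

lemma sl_nodup : (sl Sig).Nodup := Finset.sort_nodup _ _
lemma sl_length : (sl Sig).length = Sig.card := Finset.length_sort _
lemma mem_sl {c : ℕ} : c ∈ sl Sig ↔ c ∈ Sig := Finset.mem_sort _

/-- indexOf of getD for nodup lists -/
lemma indexOf_getD {l : List ℕ} (h : l.Nodup) {k : ℕ} (hk : k < l.length) :
    l.idxOf (l.getD k 0) = k := by
  rw [List.getD_eq_getElem l 0 hk]
  have h1 : l.idxOf l[k] < l.length := List.idxOf_lt_length_iff.2 (List.getElem_mem hk)
  have h2 : l[l.idxOf l[k]] = l[k] := List.getElem_idxOf h1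
  exact List.Nodup.getElem_inj_iff h |>.1 h2

lemma getD_mem {l : List ℕ} {k : ℕ} (hk : k < l.length) : l.getD k 0 ∈ l := by
  rw [List.getD_eq_getElem l 0 hk]; exact List.getElem_mem hk

lemma T_pos : 0 < T n Sig := by unfold T; omega

lemma eslot_pos (i : ℕ) (x : List ℕ) (e : ℕ) : 1 ≤ eslot n L Sig i x e := by
  unfold eslot; split <;> omega

lemma eslot_le (i : ℕ) (x : List ℕ) (hx : x.length = L) (e : ℕ) :
    eslot n L Sig i x e ≤ Sl n L Sig := by
  unfold eslot; split
  · have := List.idxOf_lt_length_iff.2 ‹(sl Sig).getD (e / 2) 0 ∈ x›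
    have : x.idxOf ((sl Sig).getD (e / 2) 0) < L := by omega
    have hT := T_pos n Sig
    unfold Sl; omega
  · have : (e / 2 + i) % T n Sig < T n Sig := Nat.mod_lt _ (T_pos n Sig)
    unfold Sl; omega

/-- the key fact: element at position p has pk = 2p -/
lemma pk_symAt {i : ℕ} {x : List ℕ} (hx : x.length = L) (hnd : x.Nodup)
    (hsub : ∀ c ∈ x, c ∈ Sig) (hi : i < n) {p e : ℕ} (hp : p < P n L Sig)
    (h : symAt n L Sig i x p = some e) : pk n L Sig i x e = 2 * p := by
  unfold symAt at h
  by_cases hpar : p % 2 = 0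
  · rw [if_pos hpar] at h
    have he : e = SEP (p / 2) := by injection h; omega
    subst he
    have : SEP (p / 2) % 2 = 1 := by simp [SEP]
    rw [pk, if_pos this]
    simp only [SEP]; omega
  · rw [if_neg hpar] at h
    set r := (p + 1) / 2 with hr
    have hr1 : 1 ≤ r := by omega
    have hrp : p = 2 * r - 1 := by omega
    have hrSl : r ≤ Sl n L Sig := by unfold P at hp; omega
    unfold slotSym at h
    rw [if_neg (by omega)] at h
    by_cases hrL : r ≤ L
    · rw [if_pos hrL] at h
      have hklt : r - 1 < x.length := by omega
      set c := x.getD (r - 1) 0 with hc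
      have hcx : c ∈ x := getD_mem hklt
      have hcsl : c ∈ sl Sig := (mem_sl Sig).2 (hsub c hcx)
      have hidx : (sl Sig).idxOf c < (sl Sig).length := List.idxOf_lt_length_iff.2 hcsl
      have he : e = 2 * (sl Sig).idxOf c := by injection h; omega
      have hepar : e % 2 = 0 := by omega
      have hdec : (sl Sig).getD (e / 2) 0 = c := by
        have : e / 2 = (sl Sig).idxOf c := by omega
        rw [this, List.getD_eq_getElem _ 0 hidx, List.getElem_idxOf]
      rw [pk, if_neg (by omega)]
      unfold eslot
      rw [hdec, if_pos hcx]
      have : x.idxOf c = r - 1 := indexOf_getD hnd hklt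
      rw [this]; omega
    · rw [if_neg hrL] at h
      set t := r - (L + 1) with ht
      set ρ := (t + T n Sig - i) % T n Sig with hρ
      by_cases hcond : ρ < Sig.card ∧ (sl Sig).getD ρ 0 ∉ x
      · rw [if_pos hcond] at h
        have he : e = 2 * ρ := by simp at h; omega
        have hepar : e % 2 = 0 := by omega
        have hed : e / 2 = ρ := by omega
        rw [pk, if_neg (by omega)]
        unfold eslot
        rw [hed, if_neg (by simpa using hcond.2)]
        -- (ρ + i) % T = t
        have hiT : i < T n Sig := by unfold T; omega
        have htT : t < T n Sig := by unfold Sl at hrSl; omega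
        have hmod : (ρ + i) % T n Sig = t := by
          rw [hρ, Nat.mod_add_mod]
          have : t + T n Sig - i + i = t + T n Sig := by omega
          rw [this, Nat.add_mod_right, Nat.mod_eq_of_lt htT]
        rw [hmod]; omega
      · rw [if_neg hcond] at h; simp at h

lemma pik_pairwise {i : ℕ} {x : List ℕ} (hx : x.length = L) (hnd : x.Nodup)
    (hsub : ∀ c ∈ x, c ∈ Sig) (hi : i < n) :
    (pik n L Sig i x).Pairwise (fun d e => pk n L Sig i x d < pk n L Sig i x e) := by
  unfold pik
  rw [List.pairwise_filterMap]
  have hbase := List.pairwise_lt_range (n := P n L Sig)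
  refine hbase.imp_of_mem ?_
  intro p q hp hq hpq
  intro d hd e he
  rw [List.mem_range] at hp hq
  have h1 := pk_symAt n L Sig hx hnd hsub hi hp hd
  have h2 := pk_symAt n L Sig hx hnd hsub hi hq he
  omega

lemma pik_nodup {i : ℕ} {x : List ℕ} (hx : x.length = L) (hnd : x.Nodup)
    (hsub : ∀ c ∈ x, c ∈ Sig) (hi : i < n) : (pik n L Sig i x).Nodup := by
  have h := pik_pairwise n L Sig hx hnd hsub hi
  exact h.imp (fun {a b} hab => by intro hh; subst hh; exact absurd hab (lt_irrefl _))

lemma mem_pik {i : ℕ} {x : List ℕ} (hx : x.length = L) (hnd : x.Nodup)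
    (hsub : ∀ c ∈ x, c ∈ Sig) (hi : i < n) {e : ℕ} :
    e ∈ pik n L Sig i x ↔ e ∈ Gam n L Sig := by
  constructor
  · intro h
    rw [pik, List.mem_filterMap] at h
    obtain ⟨p, hp, hsome⟩ := h
    rw [List.mem_range] at hp
    unfold symAt at hsome
    by_cases hpar : p % 2 = 0
    · rw [if_pos hpar] at hsome
      have he : e = SEP (p / 2) := by injection hsome; omega
      rw [Gam, Finset.mem_union]
      left
      rw [Finset.mem_image]
      exact ⟨p / 2, Finset.mem_range.2 (by unfold P at hp; omega), he.symm⟩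
    · rw [if_neg hpar] at hsome
      set r := (p + 1) / 2 with hr
      unfold slotSym at hsome
      rw [if_neg (by omega)] at hsome
      rw [Gam, Finset.mem_union]
      right
      rw [Finset.mem_image]
      by_cases hrL : r ≤ L
      · rw [if_pos hrL] at hsome
        have hklt : r - 1 < x.length := by omega
        have hcsl : x.getD (r-1) 0 ∈ sl Sig := (mem_sl Sig).2 (hsub _ (getD_mem hklt))
        have hidx : (sl Sig).idxOf (x.getD (r-1) 0) < (sl Sig).length :=
          List.idxOf_lt_length_iff.2 hcsl
        injection hsome with hh
        refine ⟨(sl Sig).idxOf (x.getD (r-1) 0), Finset.mem_range.2 ?_, hh⟩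
        rw [sl_length] at hidx; omega
      · rw [if_neg hrL] at hsome
        by_cases hcond : (r - (L + 1) + T n Sig - i) % T n Sig < Sig.card ∧
            (sl Sig).getD ((r - (L + 1) + T n Sig - i) % T n Sig) 0 ∉ x
        · rw [if_pos hcond] at hsome
          injection hsome with hh
          exact ⟨_, Finset.mem_range.2 hcond.1, hh⟩
        · rw [if_neg hcond] at hsome; simp at hsome
  · intro h
    rw [Gam, Finset.mem_union, Finset.mem_image, Finset.mem_image] at h
    rw [pik, List.mem_filterMap]
    rcases h with ⟨r, hr, he⟩ | ⟨ρ, hρ, he⟩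
    · rw [Finset.mem_range] at hr
      refine ⟨2 * r, List.mem_range.2 (by unfold P; omega), ?_⟩
      unfold symAt
      rw [if_pos (by omega)]
      rw [← he]; congr 1; congr 1; omega
    · rw [Finset.mem_range] at hρ
      have hρ2 : ρ < (sl Sig).length := by rw [sl_length]; omega
      set c := (sl Sig).getD ρ 0 with hc
      have hcsl : c ∈ sl Sig := getD_mem hρ2
      have hidxρ : (sl Sig).idxOf c = ρ := indexOf_getD (sl_nodup Sig) hρ2
      by_cases hcx : c ∈ x
      · set k := x.idxOf c with hk
        have hkl : k < x.length := List.idxOf_lt_length_iff.2 hcx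
        refine ⟨2 * (k + 1) - 1, List.mem_range.2 ?_, ?_⟩
        · have hT := T_pos n Sig; unfold P Sl; omega
        · unfold symAt
          rw [if_neg (by omega)]
          have hrr : (2 * (k + 1) - 1 + 1) / 2 = k + 1 := by omega
          rw [hrr]
          unfold slotSym
          rw [if_neg (by omega), if_pos (by omega)]
          have : x.getD (k + 1 - 1) 0 = c := by
            have : k + 1 - 1 = k := by omega
            rw [this, hk, List.getD_eq_getElem _ 0 hkl, List.getElem_idxOf]
          rw [this, hidxρ, ← he]
      · set t := (ρ + i) % T n Sig with ht
        have htT : t < T n Sig := Nat.mod_lt _ (T_pos n Sig)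
        refine ⟨2 * (L + 1 + t) - 1, List.mem_range.2 ?_, ?_⟩
        · unfold P Sl; omega
        · unfold symAt
          rw [if_neg (by omega)]
          have hrr : (2 * (L + 1 + t) - 1 + 1) / 2 = L + 1 + t := by omega
          rw [hrr]
          unfold slotSym
          rw [if_neg (by omega), if_neg (by omega)]
          have hiT : i < T n Sig := by unfold T; omega
          have hback : (L + 1 + t - (L + 1) + T n Sig - i) % T n Sig = ρ := by
            have h1 : L + 1 + t - (L + 1) = t := by omega
            rw [h1, ht]
            have h2 : (ρ + i) % T n Sig + T n Sig - i = (ρ + i) % T n Sig + (T n Sig - i) := by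
              omega
            rw [h2, Nat.mod_add_mod]
            have h3 : ρ + i + (T n Sig - i) = ρ + T n Sig := by omega
            rw [h3, Nat.add_mod_right, Nat.mod_eq_of_lt (by unfold T at *; omega)]
          rw [if_pos ?_]
          · rw [hback, ← he]
          · rw [hback]; exact ⟨hρ, by rw [← hc]; exact hcx⟩

lemma toFinset_pik {i : ℕ} {x : List ℕ} (hx : x.length = L) (hnd : x.Nodup)
    (hsub : ∀ c ∈ x, c ∈ Sig) (hi : i < n) :
    (pik n L Sig i x).toFinset = Gam n L Sig := by
  ext e
  rw [List.mem_toFinset]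
  exact mem_pik n L Sig hx hnd hsub hi

lemma card_Gam : (Gam n L Sig).card = Sig.card + (Sl n L Sig + 1) := by
  rw [Gam, Finset.card_union_of_disjoint, Finset.card_image_of_injective,
    Finset.card_image_of_injective, Finset.card_range, Finset.card_range]
  · omega
  · intro u v huv; simp only at huv; omega
  · intro u v huv; simp only [SEP] at huv; omega
  · rw [Finset.disjoint_left]
    rintro e he1 he2
    rw [Finset.mem_image] at he1 he2
    obtain ⟨r, _, hr⟩ := he1
    obtain ⟨ρ, _, hρ⟩ := he2
    simp only [SEP] at hr
    omega

lemma length_pik {i : ℕ} {x : List ℕ} (hx : x.length = L) (hnd : x.Nodup)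
    (hsub : ∀ c ∈ x, c ∈ Sig) (hi : i < n) :
    (pik n L Sig i x).length = Sig.card + (Sl n L Sig + 1) := by
  rw [← card_Gam n L Sig, ← toFinset_pik n L Sig hx hnd hsub hi,
    List.toFinset_card_of_nodup (pik_nodup n L Sig hx hnd hsub hi)]

/-- hamming distance as a count of mismatched coordinates -/
lemma hamDist_eq_card : ∀ (x y : List ℕ), x.length = y.length →
    hamDist x y =
      ((Finset.range x.length).filter (fun k => ¬ x.getD k 0 = y.getD k 0)).card := by
  intro x
  induction x with
  | nil => intro y h; simp [hamDist]
  | cons c x' ih =>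
    intro y h
    cases y with
    | nil => simp at h
    | cons d y' =>
      have h' : x'.length = y'.length := by simpa using h
      have ihy := ih y' h'
      rw [Finset.card_filter, List.length_cons, Finset.sum_range_succ']
      simp only [List.getD_cons_succ, List.getD_cons_zero]
      rw [← Finset.card_filter]
      unfold hamDist at *
      rw [List.zip_cons_cons, List.filter_cons]
      by_cases hcd : c = d
      · simp only [hcd, bne_self_eq_false]
        rw [if_neg (by simp), ihy, if_neg (by simp), Nat.add_zero]
      · have : (c != d) = true := by simpa using hcd
        rw [if_pos this, List.length_cons, ihy, if_pos (by simpa using hcd)]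

/-- matched coordinates -/
def matchedK (L : ℕ) (x y : List ℕ) : Finset ℕ :=
  (Finset.range L).filter (fun k => x.getD k 0 = y.getD k 0)

def mm (L : ℕ) (x y : List ℕ) : ℕ := (matchedK L x y).card

def matchedSet (L : ℕ) (Sig : Finset ℕ) (x y : List ℕ) : Finset ℕ :=
  (matchedK L x y).image (fun k => 2 * (sl Sig).idxOf (x.getD k 0))

def keep (L : ℕ) (x y : List ℕ) (p : ℕ) : Prop :=
  p % 2 = 0 ∨ (1 ≤ (p+1)/2 ∧ (p+1)/2 ≤ L ∧ x.getD ((p+1)/2 - 1) 0 = y.getD ((p+1)/2 - 1) 0)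

instance (L : ℕ) (x y : List ℕ) : DecidablePred (keep L x y) := fun p => by
  unfold keep; infer_instance

def wit (i : ℕ) (x y : List ℕ) : List ℕ :=
  (List.range (P n L Sig)).filterMap
    (fun p => if keep L x y p then symAt n L Sig i x p else none)

lemma filterMap_sublist_of_le {f g : ℕ → Option ℕ} :
    ∀ (l : List ℕ), (∀ p ∈ l, g p = none ∨ g p = f p) →
      List.Sublist (l.filterMap g) (l.filterMap f) := by
  intro l
  induction l with
  | nil => intro _; simp
  | cons a l ih =>
    intro h
    rw [List.filterMap_cons, List.filterMap_cons]
    have hrest := ih (fun p hp => h p (List.mem_cons_of_mem a hp))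
    rcases h a (List.mem_cons_self) with h0 | h0
    · rw [h0]
      cases hf : f a with
      | none => exact hrest
      | some b => exact hrest.cons b
    · rw [h0]
      cases hf : f a with
      | none => exact hrest
      | some b => exact hrest.cons₂ b

lemma wit_sub_left (i j : ℕ) (x y : List ℕ) : List.Sublist (wit n L Sig i x y) (pik n L Sig i x) :=
  filterMap_sublist_of_le _ (fun p _ => by
    by_cases h : keep L x y p
    · right; rw [if_pos h]
    · left; rw [if_neg h])

lemma wit_sub_right (i j : ℕ) (x y : List ℕ) : List.Sublist (wit n L Sig i x y) (pik n L Sig j y) :=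
  filterMap_sublist_of_le _ (fun p _ => by
    by_cases h : keep L x y p
    · right
      rw [if_pos h]
      unfold symAt
      by_cases hpar : p % 2 = 0
      · rw [if_pos hpar, if_pos hpar]
      · rw [if_neg hpar, if_neg hpar]
        rcases h with h | ⟨h1, h2, h3⟩
        · omega
        · unfold slotSym
          rw [if_neg (show ¬((p + 1) / 2 = 0) by omega), if_pos h2, h3,
            if_neg (show ¬((p + 1) / 2 = 0) by omega), if_pos h2]
    · left; rw [if_neg h])

lemma toFinset_wit {i : ℕ} (j : ℕ) {x y : List ℕ} (hx : x.length = L) (hnd : x.Nodup)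
    (hsub : ∀ c ∈ x, c ∈ Sig) :
    (wit n L Sig i x y).toFinset =
      (Finset.range (Sl n L Sig + 1)).image SEP ∪ matchedSet L Sig x y := by
  ext e
  rw [List.mem_toFinset, wit, List.mem_filterMap, Finset.mem_union]
  constructor
  · rintro ⟨p, hp, hsome⟩
    rw [List.mem_range] at hp
    by_cases hk : keep L x y p
    swap
    · rw [if_neg hk] at hsome; simp at hsome
    rw [if_pos hk] at hsome
    unfold symAt at hsome
    by_cases hpar : p % 2 = 0
    · rw [if_pos hpar] at hsome
      injection hsome with hh
      left
      rw [Finset.mem_image]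
      exact ⟨p / 2, Finset.mem_range.2 (by unfold P at hp; omega), hh⟩
    · rw [if_neg hpar] at hsome
      rcases hk with hk | ⟨h1, h2, h3⟩
      · omega
      right
      set r := (p + 1) / 2 with hr
      unfold slotSym at hsome
      rw [if_neg (by omega), if_pos h2] at hsome
      injection hsome with hh
      rw [matchedSet, Finset.mem_image]
      refine ⟨r - 1, ?_, hh⟩
      rw [matchedK, Finset.mem_filter, Finset.mem_range]
      exact ⟨by omega, h3⟩
  · rintro (h | h)
    · rw [Finset.mem_image] at h
      obtain ⟨r, hr, he⟩ := h
      rw [Finset.mem_range] at hr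
      refine ⟨2 * r, List.mem_range.2 (by unfold P; omega), ?_⟩
      have hkeep : keep L x y (2 * r) := Or.inl (by omega)
      rw [if_pos hkeep]
      unfold symAt
      rw [if_pos (by omega)]
      have h2 : 2 * r / 2 = r := by omega
      rw [h2, he]
    · rw [matchedSet, Finset.mem_image] at h
      obtain ⟨k, hk, he⟩ := h
      rw [matchedK, Finset.mem_filter, Finset.mem_range] at hk
      refine ⟨2 * (k + 1) - 1, List.mem_range.2 ?_, ?_⟩
      · have := T_pos n Sig; unfold P Sl; omega
      · have hkeep : keep L x y (2 * (k + 1) - 1) := by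
          right
          have h1 : (2 * (k + 1) - 1 + 1) / 2 = k + 1 := by omega
          rw [h1]
          exact ⟨by omega, by omega, by simpa using hk.2⟩
        rw [if_pos hkeep]
        unfold symAt
        rw [if_neg (by omega)]
        have h1 : (2 * (k + 1) - 1 + 1) / 2 = k + 1 := by omega
        rw [h1]
        unfold slotSym
        rw [if_neg (by omega), if_pos (by omega)]
        have h2 : k + 1 - 1 = k := by omega
        rw [h2, ← he]

lemma card_wit_target {x y : List ℕ} (hx : x.length = L) (hnd : x.Nodup)
    (hsub : ∀ c ∈ x, c ∈ Sig) :
    ((Finset.range (Sl n L Sig + 1)).image SEP ∪ matchedSet L Sig x y).card =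
      Sl n L Sig + 1 + mm L x y := by
  rw [Finset.card_union_of_disjoint, Finset.card_image_of_injective _ (fun u v huv => by
      simp only [SEP] at huv; omega), Finset.card_range]
  · congr 1
    rw [matchedSet, mm, Finset.card_image_of_injOn]
    intro k hk k' hk' hkk'
    simp only [Finset.coe_filter, Set.mem_setOf_eq, matchedK, Finset.mem_coe,
      Finset.mem_filter, Finset.mem_range] at hk hk'
    have hklt : k < x.length := by omega
    have hk'lt : k' < x.length := by omega
    have hcx : x.getD k 0 ∈ sl Sig := (mem_sl Sig).2 (hsub _ (getD_mem hklt))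
    have hcx' : x.getD k' 0 ∈ sl Sig := (mem_sl Sig).2 (hsub _ (getD_mem hk'lt))
    simp only at hkk'
    have : (sl Sig).idxOf (x.getD k 0) = (sl Sig).idxOf (x.getD k' 0) := by omega
    have heq : x.getD k 0 = x.getD k' 0 := (List.idxOf_inj hcx).1 this
    have h1 : x.idxOf (x.getD k 0) = k := indexOf_getD hnd hklt
    have h2 : x.idxOf (x.getD k' 0) = k' := indexOf_getD hnd hk'lt
    rw [heq] at h1; omega
  · rw [Finset.disjoint_left]
    rintro e he1 he2
    rw [Finset.mem_image] at he1
    rw [matchedSet, Finset.mem_image] at he2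
    obtain ⟨r, _, hr⟩ := he1
    obtain ⟨k, _, hk⟩ := he2
    simp only [SEP] at hr
    omega

lemma length_wit {i j : ℕ} {x y : List ℕ} (hx : x.length = L) (hnd : x.Nodup)
    (hsub : ∀ c ∈ x, c ∈ Sig) (hi : i < n) :
    (wit n L Sig i x y).length = Sl n L Sig + 1 + mm L x y := by
  have hnodup : (wit n L Sig i x y).Nodup :=
    List.Nodup.sublist (wit_sub_left n L Sig i j x y) (pik_nodup n L Sig hx hnd hsub hi)
  rw [← List.toFinset_card_of_nodup hnodup, toFinset_wit n L Sig j hx hnd hsub,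
    card_wit_target n L Sig hx hnd hsub]

lemma Gam_elim {e : ℕ} (h : e ∈ Gam n L Sig) :
    (e % 2 = 1 ∧ ∃ r, r ≤ Sl n L Sig ∧ e = SEP r) ∨ (e % 2 = 0 ∧ e / 2 < Sig.card) := by
  rw [Gam, Finset.mem_union, Finset.mem_image, Finset.mem_image] at h
  rcases h with ⟨r, hr, he⟩ | ⟨ρ, hρ, he⟩
  · rw [Finset.mem_range] at hr
    exact Or.inl ⟨by rw [← he]; unfold SEP; omega, r, by omega, he.symm⟩
  · rw [Finset.mem_range] at hρ
    have he' : 2 * ρ = e := he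
    exact Or.inr ⟨by omega, by omega⟩

lemma upper_bound {i j : ℕ} {x y : List ℕ}
    (hx : x.length = L) (hndx : x.Nodup) (hsubx : ∀ c ∈ x, c ∈ Sig) (hi : i < n)
    (hy : y.length = L) (hndy : y.Nodup) (hsuby : ∀ c ∈ y, c ∈ Sig) (hj : j < n)
    (hij : i ≠ j) (s : List ℕ)
    (hsx : List.Sublist s (pik n L Sig i x)) (hsy : List.Sublist s (pik n L Sig j y)) :
    s.length ≤ Sl n L Sig + 1 + mm L x y := by
  have hnds : s.Nodup := List.Nodup.sublist hsx (pik_nodup n L Sig hx hndx hsubx hi)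
  have hpi : s.Pairwise (fun d e => pk n L Sig i x d < pk n L Sig i x e) :=
    List.Pairwise.sublist hsx (pik_pairwise n L Sig hx hndx hsubx hi)
  have hpj : s.Pairwise (fun d e => pk n L Sig j y d < pk n L Sig j y e) :=
    List.Pairwise.sublist hsy (pik_pairwise n L Sig hy hndy hsuby hj)
  set pki : ℕ → ℕ := pk n L Sig i x with hpki
  set pkj : ℕ → ℕ := pk n L Sig j y with hpkj
  have hR : s.Pairwise (fun d e => (pki d < pki e ∧ pkj d < pkj e) ∨
      (pki e < pki d ∧ pkj e < pkj d)) := (hpi.and hpj).imp (fun h => Or.inl h)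
  have hcons : ∀ d ∈ s, ∀ e ∈ s, d ≠ e → (pki d < pki e ∧ pkj d < pkj e) ∨
      (pki e < pki d ∧ pkj e < pkj d) := by
    haveI : Std.Symm (fun d e => (pki d < pki e ∧ pkj d < pkj e) ∨
        (pki e < pki d ∧ pkj e < pkj d)) := ⟨by
      intro d e h
      rcases h with h | h
      · exact Or.inr h
      · exact Or.inl h⟩
    exact List.Pairwise.forall hR
  have hmemx : ∀ e ∈ s, e ∈ pik n L Sig i x := fun e he => hsx.subset he
  have hmemy : ∀ e ∈ s, e ∈ pik n L Sig j y := fun e he => hsy.subset he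
  set A := s.toFinset with hA
  have hcard : s.length = A.card := (List.toFinset_card_of_nodup hnds).symm
  -- split A
  have hsplit1 := Finset.card_filter_add_card_filter_not
    (s := A) (fun e => e % 2 = 1)
  set Aodd := A.filter (fun e => e % 2 = 1) with hAodd
  set Aev := A.filter (fun e => ¬ e % 2 = 1) with hAev
  have hsplit2 := Finset.card_filter_add_card_filter_not
    (s := Aev) (fun e => eslot n L Sig i x e = eslot n L Sig j y e)
  set Am := Aev.filter (fun e => eslot n L Sig i x e = eslot n L Sig j y e) with hAm
  set Ac := Aev.filter (fun e => ¬ eslot n L Sig i x e = eslot n L Sig j y e) with hAc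
  -- matched even elements are in matchedSet
  have hAmsub : Am ⊆ matchedSet L Sig x y := by
    intro e he
    rw [hAm, Finset.mem_filter, hAev, Finset.mem_filter] at he
    obtain ⟨⟨heA, hodd⟩, heq⟩ := he
    have hes : e ∈ s := List.mem_toFinset.1 heA
    have hex : e ∈ Gam n L Sig :=
      (mem_pik n L Sig hx hndx hsubx hi).1 (hmemx e hes)
    rcases Gam_elim n L Sig hex with ⟨h1, _⟩ | ⟨hpar, hρ⟩
    · omega
    set ρ := e / 2 with hρdef
    have hρsl : ρ < (sl Sig).length := by rw [sl_length]; omega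
    set c := (sl Sig).getD ρ 0 with hc
    have hidxρ : (sl Sig).idxOf c = ρ := indexOf_getD (sl_nodup Sig) hρsl
    by_cases hcx : c ∈ x <;> by_cases hcy : c ∈ y
    · -- both used: same position, matched
      have he1 : eslot n L Sig i x e = x.idxOf c + 1 := by rw [eslot, if_pos hcx]
      have he2 : eslot n L Sig j y e = y.idxOf c + 1 := by rw [eslot, if_pos hcy]
      have hklt : x.idxOf c < x.length := List.idxOf_lt_length_iff.2 hcx
      have hklty : y.idxOf c < y.length := List.idxOf_lt_length_iff.2 hcy
      have hkk : y.idxOf c = x.idxOf c := by omega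
      have hgx : x.getD (x.idxOf c) 0 = c := by
        rw [List.getD_eq_getElem _ 0 hklt]; exact List.getElem_idxOf hklt
      have hgy : y.getD (x.idxOf c) 0 = c := by
        rw [← hkk, List.getD_eq_getElem _ 0 hklty]; exact List.getElem_idxOf hklty
      rw [matchedSet, Finset.mem_image]
      refine ⟨x.idxOf c, ?_, ?_⟩
      · rw [matchedK, Finset.mem_filter, Finset.mem_range]
        exact ⟨by omega, by rw [hgx, hgy]⟩
      · rw [hgx, hidxρ]; omega
    · -- c ∈ x, c ∉ y : impossible
      exfalso
      have he1 : eslot n L Sig i x e = x.idxOf c + 1 := by rw [eslot, if_pos hcx]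
      have he2 : eslot n L Sig j y e = L + 1 + ((ρ + j) % T n Sig) := by
        rw [eslot, if_neg hcy]
      have := List.idxOf_lt_length_iff.2 hcx
      omega
    · exfalso
      have he1 : eslot n L Sig i x e = L + 1 + ((ρ + i) % T n Sig) := by
        rw [eslot, if_neg hcx]
      have he2 : eslot n L Sig j y e = y.idxOf c + 1 := by rw [eslot, if_pos hcy]
      have := List.idxOf_lt_length_iff.2 hcy
      omega
    · -- neither: tail slots never coincide
      exfalso
      have he1 : eslot n L Sig i x e = L + 1 + ((ρ + i) % T n Sig) := by
        rw [eslot, if_neg hcx]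
      have he2 : eslot n L Sig j y e = L + 1 + ((ρ + j) % T n Sig) := by
        rw [eslot, if_neg hcy]
      have hmod : (ρ + i) % T n Sig = (ρ + j) % T n Sig := by omega
      have : i % T n Sig = j % T n Sig := Nat.ModEq.add_left_cancel' ρ hmod
      have hiT : i < T n Sig := by unfold T; omega
      have hjT : j < T n Sig := by unfold T; omega
      rw [Nat.mod_eq_of_lt hiT, Nat.mod_eq_of_lt hjT] at this
      exact hij this
  have hAmcard : Am.card ≤ mm L x y := by
    calc Am.card ≤ (matchedSet L Sig x y).card := Finset.card_le_card hAmsub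
      _ ≤ (matchedK L x y).card := by rw [matchedSet]; exact Finset.card_image_le
      _ = mm L x y := rfl
  -- separators and cross elements
  have hkey : Aodd.card + Ac.card ≤ Sl n L Sig + 1 := by
    have hsplit3 := Finset.card_filter_add_card_filter_not
      (s := Finset.range (Sl n L Sig + 1)) (fun r => SEP r ∈ A)
    rw [Finset.card_range] at hsplit3
    have h1 : Aodd.card ≤
        ((Finset.range (Sl n L Sig + 1)).filter (fun r => SEP r ∈ A)).card := by
      have hsub : Aodd ⊆ ((Finset.range (Sl n L Sig + 1)).filter (fun r => SEP r ∈ A)).image SEP := by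
        intro e he
        rw [hAodd, Finset.mem_filter] at he
        obtain ⟨heA, hodd⟩ := he
        have hes : e ∈ s := List.mem_toFinset.1 heA
        have hex : e ∈ Gam n L Sig :=
          (mem_pik n L Sig hx hndx hsubx hi).1 (hmemx e hes)
        rcases Gam_elim n L Sig hex with ⟨_, r, hr, her⟩ | ⟨hpar, _⟩
        · rw [Finset.mem_image]
          refine ⟨r, ?_, her.symm⟩
          rw [Finset.mem_filter, Finset.mem_range]
          exact ⟨by omega, by rw [← her]; exact heA⟩
        · omega
      calc Aodd.card ≤ _ := Finset.card_le_card hsub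
        _ ≤ _ := Finset.card_image_le
    have h2 : Ac.card ≤
        ((Finset.range (Sl n L Sig + 1)).filter (fun r => ¬ SEP r ∈ A)).card := by
      apply Finset.card_le_card_of_injOn
        (fun e => min (eslot n L Sig i x e) (eslot n L Sig j y e))
      · -- maps to
        intro e he
        rw [Finset.mem_coe, hAc, Finset.mem_filter, hAev, Finset.mem_filter] at he
        obtain ⟨⟨heA, hodd⟩, hne⟩ := he
        have hes : e ∈ s := List.mem_toFinset.1 heA
        have hp1 : 1 ≤ eslot n L Sig i x e := eslot_pos n L Sig i x e
        have hq1 : 1 ≤ eslot n L Sig j y e := eslot_pos n L Sig j y e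
        have hpSl : eslot n L Sig i x e ≤ Sl n L Sig := eslot_le n L Sig i x hx e
        have hqSl : eslot n L Sig j y e ≤ Sl n L Sig := eslot_le n L Sig j y hy e
        have hminp := min_le_left (eslot n L Sig i x e) (eslot n L Sig j y e)
        have hminq := min_le_right (eslot n L Sig i x e) (eslot n L Sig j y e)
        have hminor := min_choice (eslot n L Sig i x e) (eslot n L Sig j y e)
        rw [Finset.mem_coe, Finset.mem_filter, Finset.mem_range]
        beta_reduce
        refine ⟨by omega, ?_⟩
        intro hsepA
        have hseps : SEP (min (eslot n L Sig i x e) (eslot n L Sig j y e)) ∈ s :=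
          List.mem_toFinset.1 hsepA
        have hnesep : e ≠ SEP (min (eslot n L Sig i x e) (eslot n L Sig j y e)) := by
          intro hcontra
          have : e % 2 = 1 := by rw [hcontra]; unfold SEP; omega
          omega
        have hdisj := hcons e hes _ hseps hnesep
        have hpke : pki e = 4 * eslot n L Sig i x e - 2 := by
          rw [hpki, pk, if_neg (by omega)]
        have hpkje : pkj e = 4 * eslot n L Sig j y e - 2 := by
          rw [hpkj, pk, if_neg (by omega)]
        have hsepodd : SEP (min (eslot n L Sig i x e) (eslot n L Sig j y e)) % 2 = 1 := by
          unfold SEP; omega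
        have hpksep : pki (SEP (min (eslot n L Sig i x e) (eslot n L Sig j y e))) =
            4 * (min (eslot n L Sig i x e) (eslot n L Sig j y e)) := by
          rw [hpki, pk, if_pos hsepodd]; unfold SEP; omega
        have hpkjsep : pkj (SEP (min (eslot n L Sig i x e) (eslot n L Sig j y e))) =
            4 * (min (eslot n L Sig i x e) (eslot n L Sig j y e)) := by
          rw [hpkj, pk, if_pos hsepodd]; unfold SEP; omega
        rw [hpke, hpkje, hpksep, hpkjsep] at hdisj
        omega
      · -- injective
        intro e1 he1 e2 he2 heq12
        by_contra hne12
        have he1m : e1 ∈ Ac := Finset.mem_coe.1 he1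
        have he2m : e2 ∈ Ac := Finset.mem_coe.1 he2
        rw [hAc, Finset.mem_filter, hAev, Finset.mem_filter] at he1m he2m
        obtain ⟨⟨he1A, hodd1⟩, hne1⟩ := he1m
        obtain ⟨⟨he2A, hodd2⟩, hne2⟩ := he2m
        have hs1 : e1 ∈ s := List.mem_toFinset.1 he1A
        have hs2 : e2 ∈ s := List.mem_toFinset.1 he2A
        have hdisj := hcons e1 hs1 e2 hs2 hne12
        have hpk1 : pki e1 = 4 * eslot n L Sig i x e1 - 2 := by
          rw [hpki, pk, if_neg (by omega)]
        have hpk2 : pki e2 = 4 * eslot n L Sig i x e2 - 2 := by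
          rw [hpki, pk, if_neg (by omega)]
        have hpkj1 : pkj e1 = 4 * eslot n L Sig j y e1 - 2 := by
          rw [hpkj, pk, if_neg (by omega)]
        have hpkj2 : pkj e2 = 4 * eslot n L Sig j y e2 - 2 := by
          rw [hpkj, pk, if_neg (by omega)]
        have hp11 : 1 ≤ eslot n L Sig i x e1 := eslot_pos n L Sig i x e1
        have hp21 : 1 ≤ eslot n L Sig i x e2 := eslot_pos n L Sig i x e2
        have hq11 : 1 ≤ eslot n L Sig j y e1 := eslot_pos n L Sig j y e1
        have hq21 : 1 ≤ eslot n L Sig j y e2 := eslot_pos n L Sig j y e2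
        have hmin1p := min_le_left (eslot n L Sig i x e1) (eslot n L Sig j y e1)
        have hmin1q := min_le_right (eslot n L Sig i x e1) (eslot n L Sig j y e1)
        have hmin1or := min_choice (eslot n L Sig i x e1) (eslot n L Sig j y e1)
        have hmin2p := min_le_left (eslot n L Sig i x e2) (eslot n L Sig j y e2)
        have hmin2q := min_le_right (eslot n L Sig i x e2) (eslot n L Sig j y e2)
        have hmin2or := min_choice (eslot n L Sig i x e2) (eslot n L Sig j y e2)
        simp only at heq12
        rw [hpk1, hpk2, hpkj1, hpkj2] at hdisj
        omega
    omega
  -- combine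
  rw [hcard]
  omega

lemma LCS_pik {i j : ℕ} {x y : List ℕ}
    (hx : x.length = L) (hndx : x.Nodup) (hsubx : ∀ c ∈ x, c ∈ Sig) (hi : i < n)
    (hy : y.length = L) (hndy : y.Nodup) (hsuby : ∀ c ∈ y, c ∈ Sig) (hj : j < n)
    (hij : i ≠ j) :
    LCS (pik n L Sig i x) (pik n L Sig j y) = Sl n L Sig + 1 + mm L x y := by
  have hub : ∀ b ∈ {k | ∃ s : List ℕ, s.Sublist (pik n L Sig i x) ∧
      s.Sublist (pik n L Sig j y) ∧ s.length = k}, b ≤ Sl n L Sig + 1 + mm L x y := by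
    rintro b ⟨s, h1, h2, h3⟩
    exact h3 ▸ upper_bound n L Sig hx hndx hsubx hi hy hndy hsuby hj hij s h1 h2
  have hmem : Sl n L Sig + 1 + mm L x y ∈ {k | ∃ s : List ℕ,
      s.Sublist (pik n L Sig i x) ∧ s.Sublist (pik n L Sig j y) ∧ s.length = k} :=
    ⟨wit n L Sig i x y, wit_sub_left n L Sig i j x y, wit_sub_right n L Sig i j x y,
      length_wit n L Sig (i := i) (j := j) hx hndx hsubx hi⟩
  have hne : Set.Nonempty {k | ∃ s : List ℕ, s.Sublist (pik n L Sig i x) ∧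
      s.Sublist (pik n L Sig j y) ∧ s.length = k} := ⟨_, hmem⟩
  have hbdd : BddAbove {k | ∃ s : List ℕ, s.Sublist (pik n L Sig i x) ∧
      s.Sublist (pik n L Sig j y) ∧ s.length = k} := ⟨_, fun b hb => hub b hb⟩
  exact le_antisymm (csSup_le hne hub) (le_csSup hbdd hmem)

lemma ham_eq {x y : List ℕ} (hx : x.length = L) (hy : y.length = L) :
    hamDist x y + mm L x y = L := by
  have h1 := hamDist_eq_card x y (by rw [hx, hy])
  rw [hx] at h1
  have h2 := Finset.card_filter_add_card_filter_not
    (s := Finset.range L) (fun k => x.getD k 0 = y.getD k 0)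
  rw [Finset.card_range] at h2
  have h3 : mm L x y =
      ((Finset.range L).filter (fun k => x.getD k 0 = y.getD k 0)).card := rfl
  omega

lemma mm_le {x y : List ℕ} : mm L x y ≤ L := by
  have : mm L x y ≤ (Finset.range L).card := Finset.card_le_card (Finset.filter_subset _ _)
  simpa using this

lemma dist_pik {i j : ℕ} {x y : List ℕ}
    (hx : x.length = L) (hndx : x.Nodup) (hsubx : ∀ c ∈ x, c ∈ Sig) (hi : i < n)
    (hy : y.length = L) (hndy : y.Nodup) (hsuby : ∀ c ∈ y, c ∈ Sig) (hj : j < n)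
    (hij : i ≠ j) (hL : L ≤ Sig.card) :
    ulamDist (pik n L Sig i x) (pik n L Sig j y) = hamDist x y + (Sig.card - L) := by
  rw [ulamDist, LCS_pik n L Sig hx hndx hsubx hi hy hndy hsuby hj hij,
    length_pik n L Sig hx hndx hsubx hi]
  have h1 := ham_eq L hx hy
  have h2 := mm_le (L := L) (x := x) (y := y)
  omega

end EHN

theorem embed_hamming_no_repeats :
    ∃ C : ℕ, ∀ (n L : ℕ) (Sig : Finset ℕ) (a : Fin n → List ℕ),
      (∀ i, (a i).length = L) → (∀ i, ∀ c ∈ a i, c ∈ Sig) → (∀ i, (a i).Nodup) →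
      ∃ (Gam : Finset ℕ) (π : Fin n → List ℕ) (K : ℕ),
        Gam.card ≤ C * (Sig.card + n * (Nat.log 2 n + 1)) ∧
        (∀ i, (π i).Nodup ∧ (π i).toFinset = Gam) ∧
        (∀ i j, i ≠ j → ulamDist (π i) (π j) = hamDist (a i) (a j) + K) := by
  refine ⟨5, ?_⟩
  intro n L Sig a hlen hsub hnd
  match n, a, hlen, hsub, hnd with
  | 0, a, hlen, hsub, hnd =>
    exact ⟨∅, fun _ => [], 0, by simp, fun i => i.elim0, fun i j _ => i.elim0⟩
  | (n' + 1), a, hlen, hsub, hnd =>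
    have hL : L ≤ Sig.card := by
      have h1 : (a 0).toFinset.card = L := by
        rw [List.toFinset_card_of_nodup (hnd 0), hlen 0]
      have h2 : (a 0).toFinset ⊆ Sig := fun c hc => hsub 0 c (List.mem_toFinset.1 hc)
      calc L = (a 0).toFinset.card := h1.symm
        _ ≤ Sig.card := Finset.card_le_card h2
    refine ⟨EHN.Gam (n' + 1) L Sig, fun i => EHN.pik (n' + 1) L Sig i.val (a i),
      Sig.card - L, ?_, ?_, ?_⟩
    · rw [EHN.card_Gam]
      have hlog : n' + 1 ≤ (n' + 1) * (Nat.log 2 (n' + 1) + 1) :=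
        Nat.le_mul_of_pos_right _ (by omega)
      have hSl : EHN.Sl (n' + 1) L Sig = L + (Sig.card + (n' + 1) + 1) := rfl
      omega
    · intro i
      exact ⟨EHN.pik_nodup _ _ _ (hlen i) (hnd i) (hsub i) i.isLt,
        EHN.toFinset_pik _ _ _ (hlen i) (hnd i) (hsub i) i.isLt⟩
    · intro i j hij
      exact EHN.dist_pik _ _ _ (hlen i) (hnd i) (hsub i) i.isLt
        (hlen j) (hnd j) (hsub j) j.isLt (fun h => hij (Fin.ext h)) hL
end
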